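/- arXiv:1202.2013 — 8 statements merged into one kernel-verified Lean document; each statement's English description precedes it below -/
import Mathlib

section
/- Let v₁, …, vₙ ∈ ℤⁿ be vectors that are linearly independent over ℝ. Then every integer point x ∈ ℤⁿ lying in the cone C = {μ₁v₁ + ⋯ + μₙvₙ : μᵢ ∈ ℝ, μᵢ ≥ 0} can be written uniquely in the form x = w + a₁v₁ + ⋯ + aₙvₙ, where a₁, …, aₙ are nonnegative integers and w is an integer point of the half-open fundamental parallelepiped Π = {μ₁v₁ + ⋯ + μₙvₙ : 0 ≤ μᵢ < 1}. -/
/-- Every integer point of the simplicial cone generated by linearly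
independent integer vectors `v₁, …, vₙ` is uniquely `w + Σ aᵢ vᵢ` with `aᵢ ∈ ℕ`
and `w` an integer point of the half-open fundamental parallelepiped. -/
theorem fundamental_parallelepiped_decomposition (n : ℕ)
    (v : Fin n → Fin n → ℤ)
    (hv : LinearIndependent ℝ (fun i => fun j => (v i j : ℝ)))
    (x : Fin n → ℤ)
    (hx : ∃ μ : Fin n → ℝ, (∀ i, 0 ≤ μ i) ∧ ∀ j, (x j : ℝ) = ∑ i, μ i * (v i j : ℝ)) :
    ∃! wa : (Fin n → ℤ) × (Fin n → ℕ),
      (∃ μ : Fin n → ℝ, (∀ i, 0 ≤ μ i ∧ μ i < 1) ∧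
          ∀ j, (wa.1 j : ℝ) = ∑ i, μ i * (v i j : ℝ)) ∧
      x = fun j => wa.1 j + ∑ i, (wa.2 i : ℤ) * v i j := by
  obtain ⟨μ, hμ0, hμx⟩ := hx
  have uniq : ∀ μ₁ μ₂ : Fin n → ℝ,
      (∀ j, ∑ i, μ₁ i * (v i j : ℝ) = ∑ i, μ₂ i * (v i j : ℝ)) → μ₁ = μ₂ := by
    intro μ₁ μ₂ h
    have h0 : ∑ i, (μ₁ i - μ₂ i) • (fun j => (v i j : ℝ)) = 0 := by
      funext j
      simp only [Finset.sum_apply, Pi.smul_apply, smul_eq_mul, sub_mul, Pi.zero_apply,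
        Finset.sum_sub_distrib, h j, sub_self]
    have := Fintype.linearIndependent_iff.mp hv (fun i => μ₁ i - μ₂ i) h0
    funext i
    have h2 := this i
    simpa [sub_eq_zero] using h2
  set a : Fin n → ℕ := fun i => ⌊μ i⌋₊ with ha
  set w : Fin n → ℤ := fun j => x j - ∑ i, (a i : ℤ) * v i j with hw
  refine ⟨(w, a), ⟨⟨fun i => μ i - a i, fun i => ⟨?_, ?_⟩, fun j => ?_⟩, ?_⟩, ?_⟩
  · simpa using Nat.floor_le (hμ0 i)
  · simpa using sub_lt_iff_lt_add'.mpr (Nat.lt_floor_add_one (μ i))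
  · push_cast [hw]
    rw [hμx j]
    rw [← Finset.sum_sub_distrib]
    exact Finset.sum_congr rfl fun i _ => (sub_mul (μ i) ((a i : ℝ)) _).symm
  · funext j
    simp [hw]
  · rintro ⟨w', a'⟩ ⟨⟨ν, hν, hνw⟩, hxw⟩
    have hμ' : ∀ j, (x j : ℝ) = ∑ i, (ν i + a' i) * (v i j : ℝ) := by
      intro j
      have : x j = w' j + ∑ i, (a' i : ℤ) * v i j := congrFun hxw j
      push_cast [this]
      rw [hνw j]
      rw [← Finset.sum_add_distrib]
      exact Finset.sum_congr rfl fun i _ => (add_mul (ν i) ((a' i : ℝ)) _).symm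
    have heq : μ = fun i => ν i + a' i := uniq _ _ (fun j => by rw [← hμx j, ← hμ' j])
    have ha' : a' = a := by
      funext i
      have hmi : μ i = ν i + a' i := congrFun heq i
      have h0 : (0:ℝ) ≤ ν i + (a' i : ℝ) := by
        have := (hν i).1; positivity
      have : ⌊μ i⌋₊ = a' i := by
        rw [hmi, Nat.floor_eq_iff h0]
        refine ⟨by simpa using (hν i).1, ?_⟩
        have := (hν i).2; linarith
      exact this.symm
    have hw' : w' = w := by
      funext j
      have h1 : x j = w' j + ∑ i, (a' i : ℤ) * v i j := congrFun hxw j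
      rw [ha'] at h1
      simp only [hw]
      omega
    rw [hw', ha']
end

section
/- Let n ≥ 1 and let T be a tree (a connected acyclic simple graph) on the vertex set {0, 1, …, n} in which vertex n is a leaf (has degree 1). Let Lₙ be the n×n matrix obtained from the Laplacian matrix of T by deleting the row and column indexed by n, and let d denote graph distance in T. Define the rational n×n matrix B by B_{i,j} = (d(n,i) + d(n,j) − d(i,j))/2 for 0 ≤ i, j ≤ n−1. Then Lₙ·B = I; that is, Lₙ is invertible and the (i,j) entry of Lₙ⁻¹ equals (d(n,i) + d(n,j) − d(i,j))/2, which is the distance from n to the path connecting vertices i and j, equivalently the length of the intersection of the path from n to i with the path from n to j. -/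
open SimpleGraph Walk

variable {V : Type*} {G : SimpleGraph V}

lemma aux_concat_isPath {u v w : V} {p : G.Walk u v} (hp : p.IsPath)
    (h : G.Adj v w) (hw : w ∉ p.support) : (p.concat h).IsPath := by
  rw [← isPath_reverse_iff, reverse_concat]
  exact (hp.reverse).cons (by simpa [Walk.support_reverse] using hw)

lemma dist_step [DecidableEq V] (hconn : G.Connected) (hacyc : G.IsAcyclic) (t u v : V) (h : G.Adj u v) :
    G.dist t v = G.dist t u + 1 ∨ G.dist t u = G.dist t v + 1 := by
  obtain ⟨p, hp, hl⟩ := hconn.exists_path_of_dist t u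
  by_cases hv : v ∈ p.support
  · right
    have h1 : G.dist t v ≤ (p.takeUntil v hv).length := dist_le _
    have hd : G.dist v u = 1 := dist_eq_one_iff_adj.mpr h.symm
    have h2 : G.dist v u ≤ (p.dropUntil v hv).length := dist_le _
    have h3 : (p.takeUntil v hv).length + (p.dropUntil v hv).length = G.dist t u := by
      rw [← length_append, take_spec]; exact hl
    have h4 : G.dist t u ≤ G.dist t v + G.dist v u := hconn.dist_triangle
    omega
  · left
    have hq : (p.concat h).IsPath := aux_concat_isPath hp h hv
    have hlen : (p.concat h).length = G.dist t u + 1 := by rw [length_concat, hl]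
    obtain ⟨r, hr, hrl⟩ := hconn.exists_path_of_dist t v
    have heq : (⟨p.concat h, hq⟩ : G.Path t v) = ⟨r, hr⟩ := hacyc.path_unique _ _
    have := congrArg (fun q : G.Path t v => q.1.length) heq
    simp only at this
    omega

lemma exists_unique_parent [DecidableEq V] (hconn : G.Connected) (hacyc : G.IsAcyclic) {t i : V} (hne : i ≠ t) :
    ∃! k, G.Adj i k ∧ G.dist t k + 1 = G.dist t i := by
  have hd : 0 < G.dist t i := hconn.pos_dist_of_ne (Ne.symm hne)
  have key : ∀ k1 k2 : V, (G.Adj i k1 ∧ G.dist t k1 + 1 = G.dist t i) →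
      (G.Adj i k2 ∧ G.dist t k2 + 1 = G.dist t i) → k1 = k2 := by
    rintro k1 k2 ⟨ha1, hd1⟩ ⟨ha2, hd2⟩
    obtain ⟨q1, hq1, hl1⟩ := hconn.exists_path_of_dist t k1
    obtain ⟨q2, hq2, hl2⟩ := hconn.exists_path_of_dist t k2
    have hi1 : i ∉ q1.support := by
      intro hi
      have := dist_le (q1.takeUntil i hi)
      have := length_takeUntil_le q1 hi
      omega
    have hi2 : i ∉ q2.support := by
      intro hi
      have := dist_le (q2.takeUntil i hi)
      have := length_takeUntil_le q2 hi
      omega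
    have hp1 : (q1.concat ha1.symm).IsPath := aux_concat_isPath hq1 ha1.symm hi1
    have hp2 : (q2.concat ha2.symm).IsPath := aux_concat_isPath hq2 ha2.symm hi2
    have heq : (⟨q1.concat ha1.symm, hp1⟩ : G.Path t i) = ⟨q2.concat ha2.symm, hp2⟩ :=
      hacyc.path_unique _ _
    have heq' : q1.concat ha1.symm = q2.concat ha2.symm := congrArg Subtype.val heq
    obtain ⟨hv, -⟩ := concat_inj heq'
    exact hv
  obtain ⟨p, hp, hl⟩ := hconn.exists_path_of_dist t i
  obtain ⟨k, hk, q, hq⟩ := exists_eq_cons_of_ne hne p.reverse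
  have hql : q.length = G.dist t i - 1 := by
    have : p.reverse.length = G.dist t i := by rw [length_reverse, hl]
    rw [hq] at this
    simp only [length_cons] at this
    omega
  have hdk : G.dist t k + 1 = G.dist t i := by
    have h1 : G.dist t k ≤ q.length := by rw [SimpleGraph.dist_comm]; exact dist_le q
    have h2 : G.dist t i ≤ G.dist t k + G.dist k i := hconn.dist_triangle
    have h3 : G.dist k i = 1 := dist_eq_one_iff_adj.mpr hk.symm
    omega
  exact ⟨k, ⟨hk, hdk⟩, fun k' h' => key k' k h' ⟨hk, hdk⟩⟩

lemma sum_dist_nbhd [Fintype V] [DecidableEq V] [DecidableRel G.Adj]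
    (hconn : G.Connected) (hacyc : G.IsAcyclic) {t i : V} (hne : i ≠ t) :
    ∑ k ∈ G.neighborFinset i, ((G.dist t i : ℚ) - G.dist t k) = 2 - G.degree i := by
  obtain ⟨k0, ⟨hadj0, heq0⟩, huniq⟩ := exists_unique_parent hconn hacyc hne
  have hk0mem : k0 ∈ G.neighborFinset i := by simpa using hadj0
  rw [← Finset.add_sum_erase _ _ hk0mem]
  have h1 : (G.dist t i : ℚ) - G.dist t k0 = 1 := by
    rw [← heq0]; push_cast; ring
  have h2 : ∀ k ∈ (G.neighborFinset i).erase k0, ((G.dist t i : ℚ) - G.dist t k) = -1 := by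
    intro k hk
    obtain ⟨hkne, hkmem⟩ := Finset.mem_erase.mp hk
    have hadj : G.Adj i k := by simpa using hkmem
    have hh : G.dist t k = G.dist t i + 1 := by
      rcases dist_step hconn hacyc t i k hadj with h | h
      · exact h
      · exact absurd (huniq k ⟨hadj, h.symm⟩) hkne
    rw [hh]; push_cast; ring
  rw [Finset.sum_congr rfl h2, Finset.sum_const, Finset.card_erase_of_mem hk0mem, h1]
  have hdeg : (G.neighborFinset i).card = G.degree i := G.card_neighborFinset_eq_degree i
  have hpos : 1 ≤ G.degree i := by
    rw [← hdeg]
    exact Finset.card_pos.mpr ⟨k0, hk0mem⟩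
  rw [hdeg]
  rw [nsmul_eq_mul]
  push_cast [Nat.cast_sub hpos]
  ring

lemma laplacian_entry [Fintype V] [DecidableEq V] [DecidableRel G.Adj]
    (hconn : G.Connected) (hacyc : G.IsAcyclic) {t i j : V} (hit : i ≠ t) (hjt : j ≠ t) :
    (G.degree i : ℚ) * (((G.dist t i : ℚ) + G.dist t j - G.dist i j) / 2)
      - ∑ v ∈ G.neighborFinset i, (((G.dist t v : ℚ) + G.dist t j - G.dist v j) / 2)
    = if i = j then 1 else 0 := by
  have hdeg : (G.neighborFinset i).card = G.degree i := G.card_neighborFinset_eq_degree i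
  have hconst : (G.degree i : ℚ) * (((G.dist t i : ℚ) + G.dist t j - G.dist i j) / 2)
      = ∑ _v ∈ G.neighborFinset i, (((G.dist t i : ℚ) + G.dist t j - G.dist i j) / 2) := by
    rw [Finset.sum_const, hdeg, nsmul_eq_mul]
  rw [hconst, ← Finset.sum_sub_distrib]
  have hterm : ∀ v ∈ G.neighborFinset i,
      (((G.dist t i : ℚ) + G.dist t j - G.dist i j) / 2)
        - (((G.dist t v : ℚ) + G.dist t j - G.dist v j) / 2)
      = (((G.dist t i : ℚ) - G.dist t v) - (((G.dist j i : ℚ) - G.dist j v))) / 2 := by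
    intro v _
    rw [SimpleGraph.dist_comm (u := i) (v := j), SimpleGraph.dist_comm (u := v) (v := j)]
    ring
  rw [Finset.sum_congr rfl hterm, ← Finset.sum_div, Finset.sum_sub_distrib,
    sum_dist_nbhd hconn hacyc hit]
  by_cases hij : i = j
  · subst hij
    have h2 : ∀ v ∈ G.neighborFinset i, ((G.dist i i : ℚ) - G.dist i v) = -1 := by
      intro v hv
      have hadj : G.Adj i v := by simpa using hv
      rw [SimpleGraph.dist_self, dist_eq_one_iff_adj.mpr hadj]
      norm_num
    rw [Finset.sum_congr rfl h2, Finset.sum_const, hdeg, if_pos rfl, nsmul_eq_mul]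
    ring
  · rw [sum_dist_nbhd hconn hacyc hij, if_neg hij]
    ring

/-- For a tree `T` on `{0, …, n}` with `n` a leaf, the inverse of the
Laplacian minor at `n` has `(i,j)` entry `(d(n,i) + d(n,j) − d(i,j))/2`, the
distance from `n` to the path connecting `i` and `j`. -/
theorem tree_laplacian_minor_inverse (n : ℕ) (hn : 1 ≤ n)
    (G : SimpleGraph (Fin (n + 1))) [DecidableRel G.Adj]
    (hconn : G.Connected) (hacyc : G.IsAcyclic)
    (hleaf : G.degree (Fin.last n) = 1) :
    (Matrix.of fun i j : Fin n =>
        (if i = j then (G.degree i.castSucc : ℚ)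
          else if G.Adj i.castSucc j.castSucc then -1 else 0)) *
      (Matrix.of fun i j : Fin n =>
        ((G.dist (Fin.last n) i.castSucc : ℚ) + (G.dist (Fin.last n) j.castSucc : ℚ)
            - (G.dist i.castSucc j.castSucc : ℚ)) / 2) = 1 := by
  classical
  ext i j
  rw [Matrix.mul_apply, Matrix.one_apply]
  simp only [Matrix.of_apply]
  have hmain : ∀ (c : Fin (n+1) → ℚ), c (Fin.last n) = 0 →
      ∑ k : Fin n, ((if i = k then (G.degree i.castSucc : ℚ)
          else if G.Adj i.castSucc k.castSucc then -1 else 0) * c k.castSucc)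
      = (G.degree i.castSucc : ℚ) * c i.castSucc
          - ∑ v ∈ G.neighborFinset i.castSucc, c v := by
    intro c hc
    have h1 : ∀ k : Fin n, (if i = k then (G.degree i.castSucc : ℚ)
        else if G.Adj i.castSucc k.castSucc then -1 else 0) * c k.castSucc
        = (if i = k then (G.degree i.castSucc : ℚ) * c k.castSucc else 0)
          + (if G.Adj i.castSucc k.castSucc then -c k.castSucc else 0) := by
      intro k
      by_cases h : i = k
      · subst h; simp [SimpleGraph.irrefl]
      · simp only [if_neg h]
        by_cases h2 : G.Adj i.castSucc k.castSucc
        · simp [h2]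
        · simp [h2]
    rw [Finset.sum_congr rfl (fun k _ => h1 k), Finset.sum_add_distrib]
    have hA : ∑ k : Fin n, (if i = k then (G.degree i.castSucc : ℚ) * c k.castSucc else 0)
        = (G.degree i.castSucc : ℚ) * c i.castSucc := by
      rw [Finset.sum_ite_eq]; simp
    have hB : ∑ k : Fin n, (if G.Adj i.castSucc k.castSucc then -c k.castSucc else 0)
        = - ∑ v ∈ G.neighborFinset i.castSucc, c v := by
      have hfull : ∑ v : Fin (n+1), (if G.Adj i.castSucc v then -c v else 0)
          = ∑ k : Fin n, (if G.Adj i.castSucc k.castSucc then -c k.castSucc else 0)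
            + (if G.Adj i.castSucc (Fin.last n) then -c (Fin.last n) else 0) :=
        Fin.sum_univ_castSucc _
      rw [hc] at hfull
      simp only [neg_zero, ite_self, add_zero] at hfull
      rw [← hfull, SimpleGraph.neighborFinset_eq_filter, ← Finset.sum_neg_distrib,
        Finset.sum_filter]
    rw [hA, hB]
    ring
  rw [hmain (fun v => ((G.dist (Fin.last n) v : ℚ) + (G.dist (Fin.last n) j.castSucc : ℚ)
      - (G.dist v j.castSucc : ℚ)) / 2) (by simp [SimpleGraph.dist_self])]
  have hit : i.castSucc ≠ Fin.last n := (Fin.castSucc_lt_last i).ne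
  have hjt : j.castSucc ≠ Fin.last n := (Fin.castSucc_lt_last j).ne
  rw [laplacian_entry hconn hacyc hit hjt]
  simp [Fin.castSucc_inj]
end

section
/- Let n ≥ 1 and let T be a tree on the vertex set {0, 1, …, n} in which vertex n is a leaf. Let Lₙ be the n×n matrix obtained from the Laplacian of T by deleting the row and column indexed by n, and for 0 ≤ i ≤ n−1 set bᵢ = Σ_{j=0}^{n−1} (d(n,i) + d(n,j) − d(i,j))/2, where d is graph distance in T (so bᵢ is the sum over j of the distance from n to the path connecting i and j). Then for every natural number m, the number of integer vectors λ ∈ ℤⁿ satisfying Lₙ·λ ≥ 0 componentwise and λ₀ + λ₁ + ⋯ + λ_{n−1} = m equals the number of vectors y ∈ ℕⁿ with Σ_{i=0}^{n−1} bᵢ·yᵢ = m. (Equivalently, the generating function Σ_λ q^{|λ|} over such compositions equals 1/∏_{i=0}^{n−1}(1 − q^{bᵢ}).) -/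
set_option linter.unusedSectionVars false

open SimpleGraph

section TreeAux
variable {V : Type*} [DecidableEq V] {G : SimpleGraph V}

private lemma exists_path_len (hconn : G.Connected) (u v : V) :
    ∃ p : G.Walk u v, p.IsPath ∧ p.length = G.dist u v := by
  obtain ⟨w, hw⟩ := hconn.exists_walk_length_eq_dist u v
  exact ⟨w.bypass, w.bypass_isPath,
    le_antisymm (hw ▸ w.length_bypass_le) (SimpleGraph.dist_le _)⟩

private lemma exists_down (hconn : G.Connected) {u v : V} (huv : u ≠ v) :
    ∃ j, G.Adj j v ∧ G.dist u j + 1 = G.dist u v := by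
  obtain ⟨w, hw⟩ := hconn.exists_walk_length_eq_dist v u
  cases w with
  | nil => exact absurd rfl huv.symm
  | @cons _ j _ h w' =>
    refine ⟨j, h.symm, ?_⟩
    have h1 : G.dist u j ≤ w'.length := by
      simpa using SimpleGraph.dist_le w'.reverse
    have h2 : G.dist u v ≤ G.dist u j + 1 := by
      have := hconn.dist_triangle (u := u) (v := j) (w := v)
      have hjv : G.dist j v = 1 := SimpleGraph.dist_eq_one_iff_adj.mpr h.symm
      omega
    have h3 : G.dist u v = w'.length + 1 := by
      have hcc : G.dist u v = G.dist v u := SimpleGraph.dist_comm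
      simp only [SimpleGraph.Walk.length_cons] at hw
      omega
    omega

private lemma adj_dist_step (hconn : G.Connected) (hacyc : G.IsAcyclic) {u v j : V}
    (hadj : G.Adj j v) :
    G.dist u j + 1 = G.dist u v ∨ G.dist u v + 1 = G.dist u j := by
  have t1 : G.dist u v ≤ G.dist u j + 1 := by
    have := hconn.dist_triangle (u := u) (v := j) (w := v)
    have : G.dist j v = 1 := SimpleGraph.dist_eq_one_iff_adj.mpr hadj
    omega
  have t2 : G.dist u j ≤ G.dist u v + 1 := by
    have := hconn.dist_triangle (u := u) (v := v) (w := j)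
    have : G.dist v j = 1 := SimpleGraph.dist_eq_one_iff_adj.mpr hadj.symm
    omega
  have hne : G.dist u j ≠ G.dist u v := by
    intro he
    by_cases hv : u = v
    · subst hv
      have h9 : G.dist u j = 1 := SimpleGraph.dist_eq_one_iff_adj.mpr hadj.symm
      rw [SimpleGraph.dist_self] at he
      omega
    by_cases hj : u = j
    · subst hj
      have h9 : G.dist u v = 1 := SimpleGraph.dist_eq_one_iff_adj.mpr hadj
      rw [SimpleGraph.dist_self] at he
      omega
    obtain ⟨p, hp, hpl⟩ := exists_path_len hconn j u
    by_cases hvp : v ∈ p.support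
    · have hsp := p.take_spec hvp
      have hlen : (p.takeUntil v hvp).length + (p.dropUntil v hvp).length = p.length := by
        rw [← SimpleGraph.Walk.length_append, hsp]
      have e2 : G.dist j v ≤ (p.takeUntil v hvp).length := SimpleGraph.dist_le _
      have e2' : G.dist j v = 1 := SimpleGraph.dist_eq_one_iff_adj.mpr hadj
      have e3 : G.dist v u ≤ (p.dropUntil v hvp).length := SimpleGraph.dist_le _
      have e4 : G.dist v u = G.dist u v := SimpleGraph.dist_comm
      have e5 : G.dist j u = G.dist u j := SimpleGraph.dist_comm
      have hne' : u ≠ j := hj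
      have hpos : 0 < G.dist u j := hconn.pos_dist_of_ne hne'
      omega
    · have hq : (SimpleGraph.Walk.cons hadj.symm p).IsPath := hp.cons hvp
      obtain ⟨r, hr, hrl⟩ := exists_path_len hconn v u
      have := hacyc.path_unique ⟨_, hq⟩ ⟨r, hr⟩
      have hl : (SimpleGraph.Walk.cons hadj.symm p).length = r.length :=
        congrArg (fun q : G.Path v u => q.1.length) this
      simp only [SimpleGraph.Walk.length_cons] at hl
      have e5 : G.dist j u = G.dist u j := SimpleGraph.dist_comm
      have e6 : G.dist v u = G.dist u v := SimpleGraph.dist_comm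
      omega
  omega

private lemma down_unique (hconn : G.Connected) (hacyc : G.IsAcyclic) {u v j₁ j₂ : V}
    (h1 : G.Adj j₁ v) (h2 : G.Adj j₂ v)
    (hd1 : G.dist u j₁ + 1 = G.dist u v) (hd2 : G.dist u j₂ + 1 = G.dist u v) : j₁ = j₂ := by
  have build : ∀ (j : V) (hj : G.Adj j v), G.dist u j + 1 = G.dist u v →
      ∃ p : G.Walk u j, p.IsPath ∧ v ∉ p.support := by
    intro j hj hd
    obtain ⟨p, hp, hpl⟩ := exists_path_len hconn u j
    refine ⟨p, hp, ?_⟩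
    intro hvp
    have hsp := p.take_spec hvp
    have hlen : (p.takeUntil v hvp).length + (p.dropUntil v hvp).length = p.length := by
      rw [← SimpleGraph.Walk.length_append, hsp]
    have e3 : G.dist v j ≤ (p.dropUntil v hvp).length := SimpleGraph.dist_le _
    have e2 : G.dist u v ≤ (p.takeUntil v hvp).length := SimpleGraph.dist_le _
    have e4 : G.dist v j = 1 := SimpleGraph.dist_eq_one_iff_adj.mpr hj.symm
    omega
  obtain ⟨p₁, hp1, hv1⟩ := build j₁ h1 hd1
  obtain ⟨p₂, hp2, hv2⟩ := build j₂ h2 hd2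
  have hq1 : (SimpleGraph.Walk.cons h1.symm p₁.reverse).IsPath :=
    hp1.reverse.cons (by simpa using hv1)
  have hq2 : (SimpleGraph.Walk.cons h2.symm p₂.reverse).IsPath :=
    hp2.reverse.cons (by simpa using hv2)
  have huniq := hacyc.path_unique ⟨_, hq1⟩ ⟨_, hq2⟩
  have hw : (SimpleGraph.Walk.cons h1.symm p₁.reverse) =
      (SimpleGraph.Walk.cons h2.symm p₂.reverse) := congrArg Subtype.val huniq
  have g1 := ((SimpleGraph.Walk.getVert_cons_succ (n := 0) p₁.reverse h1.symm).trans (SimpleGraph.Walk.getVert_zero _))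
  have g2 := ((SimpleGraph.Walk.getVert_cons_succ (n := 0) p₂.reverse h2.symm).trans (SimpleGraph.Walk.getVert_zero _))
  rw [hw] at g1
  rw [g2] at g1
  exact g1.symm


private lemma sum_nbr [Fintype V] [DecidableRel G.Adj] (hconn : G.Connected)
    (hacyc : G.IsAcyclic) {u v : V} (huv : u ≠ v) :
    ∑ j ∈ G.neighborFinset v, (G.dist u j : ℤ) =
      G.degree v * G.dist u v + G.degree v - 2 := by
  obtain ⟨j₀, hj₀, hd₀⟩ := exists_down hconn huv
  have hmem : j₀ ∈ G.neighborFinset v := (SimpleGraph.mem_neighborFinset _ _ _).mpr hj₀.symm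
  rw [← Finset.add_sum_erase _ _ hmem]
  have hall : ∀ j ∈ (G.neighborFinset v).erase j₀, (G.dist u j : ℤ) = (G.dist u v : ℤ) + 1 := by
    intro j hj
    obtain ⟨hne, hmemj⟩ := Finset.mem_erase.mp hj
    have hadj : G.Adj j v := ((SimpleGraph.mem_neighborFinset _ _ _).mp hmemj).symm
    rcases adj_dist_step hconn hacyc (u := u) hadj with h | h
    · exact absurd (down_unique hconn hacyc hadj hj₀ h hd₀) hne
    · exact_mod_cast congrArg (Nat.cast : ℕ → ℤ) h.symm
  rw [Finset.sum_congr rfl hall, Finset.sum_const, Finset.card_erase_of_mem hmem,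
    SimpleGraph.card_neighborFinset_eq_degree]
  have hdeg : 1 ≤ G.degree v := by
    have : 0 < (G.neighborFinset v).card := Finset.card_pos.mpr ⟨j₀, hmem⟩
    rwa [SimpleGraph.card_neighborFinset_eq_degree] at this
  have hj0 : (G.dist u j₀ : ℤ) = (G.dist u v : ℤ) - 1 := by
    have := congrArg (Nat.cast : ℕ → ℤ) hd₀
    push_cast at this
    linarith
  rw [hj0, nsmul_eq_mul, Nat.cast_sub hdeg]
  push_cast
  ring

private lemma sum_nbr_self [Fintype V] [DecidableRel G.Adj] (v : V) :
    ∑ j ∈ G.neighborFinset v, (G.dist v j : ℤ) = G.degree v := by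
  have hall : ∀ j ∈ G.neighborFinset v, (G.dist v j : ℤ) = 1 := by
    intro j hj
    have : G.dist v j = 1 :=
      SimpleGraph.dist_eq_one_iff_adj.mpr ((SimpleGraph.mem_neighborFinset _ _ _).mp hj)
    exact_mod_cast congrArg (Nat.cast : ℕ → ℤ) this
  rw [Finset.sum_congr rfl hall, Finset.sum_const, SimpleGraph.card_neighborFinset_eq_degree]
  simp

private lemma dist_parity (hconn : G.Connected) (hacyc : G.IsAcyclic) (r u v : V) :
    (G.dist r u + G.dist r v + G.dist u v) % 2 = 0 := by
  suffices H : ∀ (k : ℕ) (u v : V), G.dist u v ≤ k → (G.dist r u + G.dist r v + G.dist u v) % 2 = 0 by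
    exact H (G.dist u v) u v le_rfl
  intro k
  induction k with
  | zero =>
    intro u v h
    have h0 : G.dist u v = 0 := Nat.le_zero.mp h
    have : u = v := (hconn.dist_eq_zero_iff).mp h0
    subst this
    omega
  | succ k ih =>
    intro u v h
    by_cases huv : u = v
    · subst huv
      rw [SimpleGraph.dist_self]
      omega
    · obtain ⟨j, hadj, hdj⟩ := exists_down hconn huv
      have h1 := ih u j (by omega)
      rcases adj_dist_step hconn hacyc (u := r) hadj with h2 | h2 <;> omega


/-- Distance from `r` to the path connecting `u` and `v`, times 2. -/
private noncomputable def cw (G : SimpleGraph V) (r u v : V) : ℤ :=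
  (G.dist r u : ℤ) + (G.dist r v : ℤ) - (G.dist u v : ℤ)

private lemma sum_nbr_cw [Fintype V] [DecidableRel G.Adj]
    (hconn : G.Connected) (hacyc : G.IsAcyclic) {r v : V} (k : V) (hrv : r ≠ v) :
    ∑ w ∈ G.neighborFinset v, cw G r w k =
      (G.degree v : ℤ) * cw G r v k - (if v = k then 2 else 0) := by
  have h1 : ∑ w ∈ G.neighborFinset v, (G.dist r w : ℤ) =
      G.degree v * G.dist r v + G.degree v - 2 := sum_nbr hconn hacyc hrv
  have h2 : ∑ w ∈ G.neighborFinset v, (G.dist w k : ℤ) =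
      (if v = k then (G.degree v : ℤ) else G.degree v * G.dist k v + G.degree v - 2) := by
    have hc : ∀ w ∈ G.neighborFinset v, (G.dist w k : ℤ) = (G.dist k w : ℤ) := by
      intro w _
      rw [SimpleGraph.dist_comm]
    rw [Finset.sum_congr rfl hc]
    by_cases hvk : v = k
    · subst hvk
      rw [if_pos rfl]
      exact sum_nbr_self v
    · rw [if_neg hvk]
      exact sum_nbr hconn hacyc (fun h => hvk h.symm)
  have h3 : ∑ w ∈ G.neighborFinset v, cw G r w k =
      (∑ w ∈ G.neighborFinset v, (G.dist r w : ℤ))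
      + (G.degree v : ℤ) * (G.dist r k : ℤ)
      - ∑ w ∈ G.neighborFinset v, (G.dist w k : ℤ) := by
    simp only [cw]
    rw [Finset.sum_sub_distrib, Finset.sum_add_distrib, Finset.sum_const,
      SimpleGraph.card_neighborFinset_eq_degree, nsmul_eq_mul]
  rw [h3, h1, h2]
  by_cases hvk : v = k
  · subst hvk
    rw [if_pos rfl, if_pos rfl]
    simp only [cw, SimpleGraph.dist_self]
    push_cast
    ring
  · rw [if_neg hvk, if_neg hvk]
    have hck : (G.dist k v : ℤ) = G.dist v k := by rw [SimpleGraph.dist_comm]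
    simp only [cw]
    rw [hck]
    ring

end TreeAux


/-- For a tree `T` on `{0, …, n}` with `n` a leaf, the number of
compositions constrained by the Laplacian minor at `n` with `|λ| = m` equals the
number of `y ∈ ℕⁿ` with `Σ bᵢ yᵢ = m`, where `bᵢ` is the sum over `j` of the
distance from `n` to the path connecting `i` and `j`. -/
theorem tree_laplacian_minor_generating_function (n : ℕ) (hn : 1 ≤ n)
    (G : SimpleGraph (Fin (n + 1))) [DecidableRel G.Adj]
    (hconn : G.Connected) (hacyc : G.IsAcyclic)
    (hleaf : G.degree (Fin.last n) = 1) (m : ℕ) :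
    {lam : Fin n → ℤ |
        (∀ i, 0 ≤ (Matrix.of fun i j : Fin n =>
            (if i = j then (G.degree i.castSucc : ℤ)
              else if G.Adj i.castSucc j.castSucc then -1 else 0)).mulVec lam i) ∧
        ∑ i, lam i = (m : ℤ)}.ncard =
      {y : Fin n → ℕ |
        ∑ i : Fin n, (∑ j : Fin n, ((G.dist (Fin.last n) i.castSucc : ℚ)
              + (G.dist (Fin.last n) j.castSucc : ℚ)
              - (G.dist i.castSucc j.castSucc : ℚ)) / 2) * (y i : ℚ) = (m : ℚ)}.ncard := by
  classical
  set L : Matrix (Fin n) (Fin n) ℤ := Matrix.of fun i j : Fin n =>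
      (if i = j then (G.degree i.castSucc : ℤ)
        else if G.Adj i.castSucc j.castSucc then -1 else 0) with hLdef
  have hNe : ∀ i : Fin n, (Fin.last n : Fin (n + 1)) ≠ i.castSucc :=
    fun i => (Fin.castSucc_lt_last i).ne'
  -- halved entries
  have hCp : ∀ i k : Fin n, ∃ e : ℤ, 0 ≤ e ∧ cw G (Fin.last n) i.castSucc k.castSucc = 2 * e := by
    intro i k
    have hpar := dist_parity hconn hacyc (Fin.last n) i.castSucc k.castSucc
    have htri : G.dist i.castSucc k.castSucc ≤
        G.dist (Fin.last n) i.castSucc + G.dist (Fin.last n) k.castSucc := by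
      have t1 := hconn.dist_triangle (u := i.castSucc) (v := Fin.last n) (w := k.castSucc)
      have t2 : G.dist i.castSucc (Fin.last n) = G.dist (Fin.last n) i.castSucc :=
        SimpleGraph.dist_comm
      omega
    have hdvd : (2 : ℤ) ∣ cw G (Fin.last n) i.castSucc k.castSucc := by
      simp only [cw]
      omega
    refine ⟨cw G (Fin.last n) i.castSucc k.castSucc / 2,
      Int.ediv_nonneg ?_ (by norm_num), (Int.mul_ediv_cancel' hdvd).symm⟩
    simp only [cw]
    omega
  choose c hcnn hceq using hCp
  have hcsymm : ∀ i k : Fin n, c i k = c k i := by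
    intro i k
    have h1 := hceq i k
    have h2 := hceq k i
    have h3 : cw G (Fin.last n) i.castSucc k.castSucc = cw G (Fin.last n) k.castSucc i.castSucc := by
      simp only [cw]
      have hcc : G.dist i.castSucc k.castSucc = G.dist k.castSucc i.castSucc :=
        SimpleGraph.dist_comm
      rw [hcc]
      ring
    omega
  -- the key matrix identity (times two)
  have hmain : ∀ i k : Fin n,
      ∑ j : Fin n, L i j * cw G (Fin.last n) j.castSucc k.castSucc =
        if i = k then 2 else 0 := by
    intro i k
    have hsplit : ∀ j : Fin n, L i j * cw G (Fin.last n) j.castSucc k.castSucc =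
        (if i = j then (G.degree i.castSucc : ℤ) * cw G (Fin.last n) j.castSucc k.castSucc
          else 0) +
        (if G.Adj i.castSucc j.castSucc then -(cw G (Fin.last n) j.castSucc k.castSucc)
          else 0) := by
      intro j
      by_cases h : i = j
      · subst h
        simp [hLdef]
      · by_cases h2 : G.Adj i.castSucc j.castSucc <;> simp [hLdef, h, h2]
    rw [Finset.sum_congr rfl fun j _ => hsplit j, Finset.sum_add_distrib]
    have e1 : ∑ j : Fin n,
        (if i = j then (G.degree i.castSucc : ℤ) * cw G (Fin.last n) j.castSucc k.castSucc
          else 0) = (G.degree i.castSucc : ℤ) * cw G (Fin.last n) i.castSucc k.castSucc := by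
      rw [Finset.sum_ite_eq]
      simp
    have e3 : ∑ j : Fin n,
        (if G.Adj i.castSucc j.castSucc then cw G (Fin.last n) j.castSucc k.castSucc else 0)
        = ∑ w ∈ G.neighborFinset i.castSucc, cw G (Fin.last n) w k.castSucc := by
      rw [SimpleGraph.neighborFinset_eq_filter, Finset.sum_filter, Fin.sum_univ_castSucc]
      have hN0 : cw G (Fin.last n) (Fin.last n) k.castSucc = 0 := by
        simp [cw, SimpleGraph.dist_self]
      rw [hN0]
      simp
    have e2 : ∑ j : Fin n,
        (if G.Adj i.castSucc j.castSucc then -(cw G (Fin.last n) j.castSucc k.castSucc) else 0)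
        = -∑ w ∈ G.neighborFinset i.castSucc, cw G (Fin.last n) w k.castSucc := by
      rw [← e3, ← Finset.sum_neg_distrib]
      refine Finset.sum_congr rfl fun j _ => ?_
      by_cases h2 : G.Adj i.castSucc j.castSucc <;> simp [h2]
    rw [e1, e2, sum_nbr_cw hconn hacyc k.castSucc (hNe i)]
    by_cases hik : i = k
    · subst hik
      rw [if_pos rfl, if_pos rfl]
      ring
    · have hik' : i.castSucc ≠ k.castSucc := fun h => hik (Fin.castSucc_inj.mp h)
      rw [if_neg hik', if_neg hik]
      ring
  have hLC : ∀ i k : Fin n, ∑ j : Fin n, L i j * c j k = if i = k then 1 else 0 := by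
    intro i k
    have h2 : 2 * ∑ j : Fin n, L i j * c j k = 2 * (if i = k then 1 else 0) := by
      rw [Finset.mul_sum]
      have hterm : ∀ j : Fin n, 2 * (L i j * c j k) =
          L i j * cw G (Fin.last n) j.castSucc k.castSucc := by
        intro j
        rw [hceq]
        ring
      rw [Finset.sum_congr rfl fun j _ => hterm j, hmain]
      by_cases hik : i = k <;> simp [hik]
    exact mul_left_cancel₀ two_ne_zero h2
  have hLCmat : L * Matrix.of c = 1 := by
    ext i k
    rw [Matrix.mul_apply, Matrix.one_apply]
    simpa using hLC i k
  have hCLmat : Matrix.of c * L = 1 := mul_eq_one_comm.mp hLCmat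
  have hrec1 : ∀ lam : Fin n → ℤ, (Matrix.of c).mulVec (L.mulVec lam) = lam := by
    intro lam
    rw [Matrix.mulVec_mulVec, hCLmat, Matrix.one_mulVec]
  have hrec2 : ∀ y : Fin n → ℤ, L.mulVec ((Matrix.of c).mulVec y) = y := by
    intro y
    rw [Matrix.mulVec_mulVec, hLCmat, Matrix.one_mulVec]
  have hmv : ∀ (M : Matrix (Fin n) (Fin n) ℤ) (v : Fin n → ℤ) (i : Fin n),
      M.mulVec v i = ∑ j : Fin n, M i j * v j := fun M v i => rfl
  have hbq : ∀ i : Fin n,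
      (∑ j : Fin n, ((G.dist (Fin.last n) i.castSucc : ℚ) + (G.dist (Fin.last n) j.castSucc : ℚ)
          - (G.dist i.castSucc j.castSucc : ℚ)) / 2) = ∑ j : Fin n, (c i j : ℚ) := by
    intro i
    refine Finset.sum_congr rfl fun j _ => ?_
    have h := hceq i j
    have h2 : ((cw G (Fin.last n) i.castSucc j.castSucc : ℤ) : ℚ) = ((2 * c i j : ℤ) : ℚ) := by
      exact_mod_cast congrArg (Int.cast : ℤ → ℚ) h
    simp only [cw] at h2
    push_cast at h2
    linarith
  -- the bijection
  set F : (Fin n → ℤ) → (Fin n → ℕ) := fun lam i => (L.mulVec lam i).toNat with hF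
  have hinj : Set.InjOn F
      {lam : Fin n → ℤ | (∀ i, 0 ≤ L.mulVec lam i) ∧ ∑ i, lam i = (m : ℤ)} := by
    intro l1 h1 l2 h2 he
    have hLe : L.mulVec l1 = L.mulVec l2 := by
      funext i
      have he' := congrFun he i
      simp only [hF] at he'
      have p1 := h1.1 i
      have p2 := h2.1 i
      omega
    calc l1 = (Matrix.of c).mulVec (L.mulVec l1) := (hrec1 l1).symm
      _ = (Matrix.of c).mulVec (L.mulVec l2) := by rw [hLe]
      _ = l2 := hrec1 l2
  have himg : F '' {lam : Fin n → ℤ | (∀ i, 0 ≤ L.mulVec lam i) ∧ ∑ i, lam i = (m : ℤ)} =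
      {y : Fin n → ℕ |
        ∑ i : Fin n, (∑ j : Fin n, ((G.dist (Fin.last n) i.castSucc : ℚ)
              + (G.dist (Fin.last n) j.castSucc : ℚ)
              - (G.dist i.castSucc j.castSucc : ℚ)) / 2) * (y i : ℚ) = (m : ℚ)} := by
    ext y
    constructor
    · rintro ⟨lam, ⟨hpos, hsum⟩, rfl⟩
      have hyiQ : ∀ i : Fin n, ((F lam i : ℕ) : ℚ) = ((L.mulVec lam i : ℤ) : ℚ) := by
        intro i
        have : ((F lam i : ℕ) : ℤ) = L.mulVec lam i := Int.toNat_of_nonneg (hpos i)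
        exact_mod_cast congrArg (Int.cast : ℤ → ℚ) this
      have key : ∑ i : Fin n, (∑ j : Fin n, c i j) * L.mulVec lam i = (m : ℤ) := by
        calc ∑ i : Fin n, (∑ j : Fin n, c i j) * L.mulVec lam i
            = ∑ i : Fin n, ∑ j : Fin n, c i j * L.mulVec lam i := by
              exact Finset.sum_congr rfl fun i _ => Finset.sum_mul _ _ _
          _ = ∑ j : Fin n, ∑ i : Fin n, c i j * L.mulVec lam i := Finset.sum_comm
          _ = ∑ j : Fin n, ∑ i : Fin n, c j i * L.mulVec lam i := by
              exact Finset.sum_congr rfl fun j _ => Finset.sum_congr rfl fun i _ => by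
                rw [hcsymm]
          _ = ∑ j : Fin n, (Matrix.of c).mulVec (L.mulVec lam) j := by
              exact Finset.sum_congr rfl fun j _ => (hmv _ _ _).symm
          _ = ∑ j : Fin n, lam j := by rw [hrec1 lam]
          _ = (m : ℤ) := hsum
      show ∑ i : Fin n, (∑ j : Fin n, ((G.dist (Fin.last n) i.castSucc : ℚ)
              + (G.dist (Fin.last n) j.castSucc : ℚ)
              - (G.dist i.castSucc j.castSucc : ℚ)) / 2) * ((F lam i : ℕ) : ℚ) = (m : ℚ)
      calc ∑ i : Fin n, (∑ j : Fin n, ((G.dist (Fin.last n) i.castSucc : ℚ)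
              + (G.dist (Fin.last n) j.castSucc : ℚ)
              - (G.dist i.castSucc j.castSucc : ℚ)) / 2) * ((F lam i : ℕ) : ℚ)
          = ∑ i : Fin n, (∑ j : Fin n, (c i j : ℚ)) * ((L.mulVec lam i : ℤ) : ℚ) := by
            exact Finset.sum_congr rfl fun i _ => by rw [hbq i, hyiQ i]
        _ = ((∑ i : Fin n, (∑ j : Fin n, c i j) * L.mulVec lam i : ℤ) : ℚ) := by
            push_cast
            ring
        _ = ((m : ℤ) : ℚ) := by rw [key]
        _ = (m : ℚ) := by push_cast; ring
    · intro hy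
      simp only [Set.mem_setOf_eq] at hy
      refine ⟨(Matrix.of c).mulVec fun i => (y i : ℤ), ⟨⟨?_, ?_⟩, ?_⟩⟩
      · intro i
        rw [hrec2]
        positivity
      · have hZ : ∑ j : Fin n, (Matrix.of c).mulVec (fun i => (y i : ℤ)) j =
            ∑ i : Fin n, (∑ j : Fin n, c i j) * (y i : ℤ) := by
          calc ∑ j : Fin n, (Matrix.of c).mulVec (fun i => (y i : ℤ)) j
              = ∑ j : Fin n, ∑ i : Fin n, c j i * (y i : ℤ) := by
                exact Finset.sum_congr rfl fun j _ => hmv _ _ _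
            _ = ∑ i : Fin n, ∑ j : Fin n, c j i * (y i : ℤ) := Finset.sum_comm
            _ = ∑ i : Fin n, ∑ j : Fin n, c i j * (y i : ℤ) := by
                exact Finset.sum_congr rfl fun i _ => Finset.sum_congr rfl fun j _ => by
                  rw [hcsymm]
            _ = ∑ i : Fin n, (∑ j : Fin n, c i j) * (y i : ℤ) := by
                exact Finset.sum_congr rfl fun i _ => (Finset.sum_mul _ _ _).symm
        have hQ : ((∑ i : Fin n, (∑ j : Fin n, c i j) * (y i : ℤ) : ℤ) : ℚ) = (m : ℚ) := by
          calc ((∑ i : Fin n, (∑ j : Fin n, c i j) * (y i : ℤ) : ℤ) : ℚ)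
              = ∑ i : Fin n, (∑ j : Fin n, (c i j : ℚ)) * ((y i : ℕ) : ℚ) := by
                push_cast
                ring
            _ = ∑ i : Fin n, (∑ j : Fin n, ((G.dist (Fin.last n) i.castSucc : ℚ)
                  + (G.dist (Fin.last n) j.castSucc : ℚ)
                  - (G.dist i.castSucc j.castSucc : ℚ)) / 2) * ((y i : ℕ) : ℚ) := by
                exact Finset.sum_congr rfl fun i _ => by rw [hbq i]
            _ = (m : ℚ) := hy
        rw [hZ]
        exact_mod_cast hQ
      · funext i
        simp only [hF]
        rw [hrec2]
        simp
  rw [← himg]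
  exact (Set.ncard_image_of_injOn hinj).symm
end

section
/- Let n ≥ 3 and let c ∈ ℤ^{n−1} be a vector whose entries satisfy 0 ≤ cⱼ ≤ n−1 for all j. Let x = L_{n,cyc}⁻¹·c ∈ ℚ^{n−1}. If the first coordinate x₁ is an integer, then every coordinate x_k (1 ≤ k ≤ n−1) is an integer. -/
/-- The inverse of the Laplacian minor of the `n`-cycle:
`b_{i,j} = i(n−j)/n` for `i ≤ j` and `j(n−i)/n` for `i > j`, where the index
`i : Fin (n-1)` represents the vertex `i+1 ∈ {1, …, n−1}`. -/
def cycleLaplacianMinorInv (n : ℕ) : Matrix (Fin (n - 1)) (Fin (n - 1)) ℚ :=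
  Matrix.of fun i j =>
    if i.val ≤ j.val then ((i.val : ℚ) + 1) * ((n : ℚ) - ((j.val : ℚ) + 1)) / (n : ℚ)
    else ((j.val : ℚ) + 1) * ((n : ℚ) - ((i.val : ℚ) + 1)) / (n : ℚ)

/-- If `c ∈ ℤ^{n−1}` has entries in `{0, …, n−1}` and
`x = L_{n,cyc}⁻¹·c` has integral first coordinate, then `x` is integral. -/
theorem cycle_fpp_integrality (n : ℕ) (hn : 3 ≤ n)
    (c : Fin (n - 1) → ℤ) (hc : ∀ j, 0 ≤ c j ∧ c j ≤ (n : ℤ) - 1)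
    (h1 : ∃ z : ℤ,
      (cycleLaplacianMinorInv n).mulVec (fun j => (c j : ℚ)) ⟨0, by omega⟩ = (z : ℚ)) :
    ∀ k : Fin (n - 1), ∃ z : ℤ,
      (cycleLaplacianMinorInv n).mulVec (fun j => (c j : ℚ)) k = (z : ℚ) := by
  obtain ⟨z, hz⟩ := h1
  intro k
  refine ⟨((k.val : ℤ) + 1) * z +
      ∑ j : Fin (n - 1), (if j.val < k.val then (j.val : ℤ) - k.val else 0) * c j, ?_⟩
  have hn0 : (n : ℚ) ≠ 0 := by
    exact_mod_cast Nat.cast_ne_zero.mpr (by omega)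
  have hz' : ∑ j, cycleLaplacianMinorInv n ⟨0, by omega⟩ j * (c j : ℚ) = (z : ℚ) := by
    simpa [Matrix.mulVec, dotProduct] using hz
  have key : ∀ j : Fin (n - 1), cycleLaplacianMinorInv n k j =
      ((k.val : ℚ) + 1) * cycleLaplacianMinorInv n ⟨0, by omega⟩ j +
        (if j.val < k.val then (j.val : ℚ) - k.val else 0) := by
    intro j
    simp only [cycleLaplacianMinorInv, Matrix.of_apply]
    rcases lt_or_ge j.val k.val with h | h
    · rw [if_neg (by omega), if_pos h, if_pos (Nat.zero_le _)]
      field_simp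
      ring
    · rw [if_pos h, if_pos (Nat.zero_le _), if_neg (by omega)]
      field_simp
      simp
  have main : ∑ j, cycleLaplacianMinorInv n k j * (c j : ℚ) =
      ((k.val : ℚ) + 1) * (∑ j, cycleLaplacianMinorInv n ⟨0, by omega⟩ j * (c j : ℚ)) +
        ∑ j, (if j.val < k.val then (j.val : ℚ) - k.val else 0) * (c j : ℚ) := by
    rw [Finset.mul_sum, ← Finset.sum_add_distrib]
    exact Finset.sum_congr rfl fun j _ => by rw [key j]; ring
  simp only [Matrix.mulVec, dotProduct]
  rw [main, hz']
  push_cast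
  ring
end

section
/- Let n ≥ 3. The map λ ↦ L_{n,cyc}·λ is a bijection from the set of integer vectors {λ ∈ ℤ^{n−1} : L_{n,cyc}·λ ≥ 0 componentwise} onto the set {d ∈ ℕ^{n−1} : n divides Σ_{j=1}^{n−1} (n−j)·dⱼ}. (This is the bijective form of the multivariate integer point transform identity σ_{K_n}(z) = (Σ_{c ∈ S_n} z^{L⁻¹c·n})/∏ⱼ(1 − z^{n·(L⁻¹)ⱼ}), where S_n is the set of solutions to Σ_{j=1}^{n−1}(n−j)cⱼ ≡ 0 (mod n) with cⱼ ∈ {0, 1, …, n−1}.) -/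
/-- The Laplacian minor of the `n`-cycle over `ℤ`: the `(n−1)×(n−1)` tridiagonal
matrix with `2` on the diagonal and `−1` on the off-diagonals.  Index
`i : Fin (n-1)` represents the vertex `i+1 ∈ {1, …, n−1}`. -/
def cycleLaplacianMinorZ (n : ℕ) : Matrix (Fin (n - 1)) (Fin (n - 1)) ℤ :=
  Matrix.of fun i j =>
    if i = j then 2 else if i.val + 1 = j.val ∨ j.val + 1 = i.val then -1 else 0

namespace CycleAux

/-- `n` times the inverse of the cycle Laplacian minor. -/
def Cfun (n : ℕ) (i j : Fin (n - 1)) : ℤ :=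
  (n : ℤ) * min ((i.val : ℤ) + 1) ((j.val : ℤ) + 1) - ((i.val : ℤ) + 1) * ((j.val : ℤ) + 1)

lemma Cfun_symm (n : ℕ) (i j : Fin (n - 1)) : Cfun n i j = Cfun n j i := by
  unfold Cfun; rw [min_comm]; ring

lemma L_symm (n : ℕ) (i j : Fin (n - 1)) :
    cycleLaplacianMinorZ n i j = cycleLaplacianMinorZ n j i := by
  unfold cycleLaplacianMinorZ
  simp only [Matrix.of_apply]
  split_ifs with h1 h2 h3 h4 <;> simp_all [Fin.ext_iff] <;> omega

/-- sum of an indicator on the value of a `Fin`. -/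
lemma sum_if_val {m : ℕ} (v : ℕ) (f : Fin m → ℤ) :
    (∑ j : Fin m, if j.val = v then f j else 0) = if h : v < m then f ⟨v, h⟩ else 0 := by
  split
  · rename_i h
    rw [Finset.sum_eq_single ⟨v, h⟩]
    · simp
    · intro b _ hb
      rw [if_neg]
      intro hbv
      exact hb (Fin.ext hbv)
    · intro h'; exact absurd (Finset.mem_univ _) h'
  · rename_i h
    apply Finset.sum_eq_zero
    intro b _
    rw [if_neg]
    omega

def ve (n : ℕ) (f : Fin (n - 1) → ℤ) (a : ℕ) : ℤ :=
  if h : 1 ≤ a ∧ a ≤ n - 1 then f ⟨a - 1, by omega⟩ else 0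

lemma mulVec_eq (n : ℕ) (f : Fin (n - 1) → ℤ) (k : Fin (n - 1)) :
    (cycleLaplacianMinorZ n).mulVec f k
      = 2 * ve n f (k.val + 1) - ve n f k.val - ve n f (k.val + 2) := by
  have hexp : ∀ j : Fin (n - 1), cycleLaplacianMinorZ n k j * f j
      = 2 * (if j.val = k.val then f j else 0) - (if j.val + 1 = k.val then f j else 0)
        - (if j.val = k.val + 1 then f j else 0) := by
    intro j
    simp only [cycleLaplacianMinorZ, Matrix.of_apply, Fin.ext_iff]
    split_ifs <;> first | ring1 | (exfalso; omega)
  have hk := k.isLt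
  simp only [Matrix.mulVec, dotProduct]
  rw [Finset.sum_congr rfl (fun j _ => hexp j)]
  rw [Finset.sum_sub_distrib, Finset.sum_sub_distrib, ← Finset.mul_sum]
  have e1 : (∑ j : Fin (n-1), if j.val = k.val then f j else 0) = ve n f (k.val + 1) := by
    rw [sum_if_val, ve, dif_pos (show 1 ≤ k.val + 1 ∧ k.val + 1 ≤ n - 1 by omega), dif_pos k.isLt]
    exact congrArg f (Fin.ext rfl)
  have e2 : (∑ j : Fin (n-1), if j.val + 1 = k.val then f j else 0) = ve n f k.val := by
    by_cases hk : 1 ≤ k.val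
    · have : ∀ j : Fin (n-1), (if j.val + 1 = k.val then f j else 0)
          = (if j.val = k.val - 1 then f j else 0) := by
        intro j; by_cases h : j.val + 1 = k.val
        · rw [if_pos h, if_pos (by omega)]
        · rw [if_neg h, if_neg (by omega)]
      rw [Finset.sum_congr rfl (fun j _ => this j), sum_if_val, ve,
        dif_pos (by omega), dif_pos (by omega)]
    · have hk0 : k.val = 0 := by omega
      rw [ve, dif_neg (by omega)]
      apply Finset.sum_eq_zero; intro b _; rw [if_neg (by omega)]
  have e3 : (∑ j : Fin (n-1), if j.val = k.val + 1 then f j else 0) = ve n f (k.val + 2) := by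
    rw [sum_if_val, ve]
    by_cases h : k.val + 1 < n - 1
    · rw [dif_pos h, dif_pos (by omega)]
      exact congrArg f (Fin.ext rfl)
    · rw [dif_neg h, dif_neg (by omega)]
  rw [e1, e2, e3]

/-- The discrete-second-difference identity for `b ↦ N·min a b − a·b`. -/
lemma key (N a b : ℤ) (ha : 1 ≤ a) (hb : 0 ≤ b) :
    2 * (N * min a (b + 1) - a * (b + 1)) - (N * min a b - a * b)
      - (N * min a (b + 2) - a * (b + 2)) = if a = b + 1 then N else 0 := by
  rcases lt_trichotomy a (b + 1) with h | h | h
  · rw [min_eq_left (by omega), min_eq_left (by omega), min_eq_left (by omega), if_neg (by omega)]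
    ring
  · rw [min_eq_right (by omega), min_eq_right (by omega), min_eq_left (by omega), if_pos h]
    subst h; ring
  · rw [min_eq_right (by omega), min_eq_right (by omega), min_eq_right (by omega),
      if_neg (by omega)]
    ring

lemma ve_C (n : ℕ) (hn : 3 ≤ n) (i : Fin (n - 1)) (a : ℕ) (ha : a ≤ n) :
    ve n (fun j => Cfun n i j) a
      = (n : ℤ) * min ((i.val : ℤ) + 1) (a : ℤ) - ((i.val : ℤ) + 1) * (a : ℤ) := by
  have hi := i.isLt
  unfold ve
  by_cases h : 1 ≤ a ∧ a ≤ n - 1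
  · rw [dif_pos h]
    simp only [Cfun, Fin.val_mk, Nat.cast_sub (show 1 ≤ a by omega)]
    have h1 : ((a : ℤ) - 1 + 1) = (a : ℤ) := by push_cast; ring
    push_cast
    rw [h1]
  · rw [dif_neg h]
    rcases Nat.lt_or_ge a 1 with h' | h'
    · have : a = 0 := by omega
      subst this
      rw [min_eq_right (by push_cast; omega)]
      push_cast; ring
    · have : a = n := by omega
      subst this
      rw [min_eq_left (by push_cast; omega)]
      ring

/-- The central identity: `∑_j C i j · L j k = n·δ_{ik}`. -/
lemma star (n : ℕ) (hn : 3 ≤ n) (i k : Fin (n - 1)) :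
    (∑ j : Fin (n - 1), Cfun n i j * cycleLaplacianMinorZ n j k)
      = if i = k then (n : ℤ) else 0 := by
  have hk := k.isLt
  have h1 : (∑ j : Fin (n - 1), Cfun n i j * cycleLaplacianMinorZ n j k)
      = (cycleLaplacianMinorZ n).mulVec (fun j => Cfun n i j) k := by
    simp only [Matrix.mulVec, dotProduct]
    apply Finset.sum_congr rfl
    intro j _
    rw [L_symm, mul_comm]
  rw [h1, mulVec_eq, ve_C n hn i (k.val + 1) (by omega), ve_C n hn i k.val (by omega),
    ve_C n hn i (k.val + 2) (by omega)]
  push_cast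
  rw [key (n : ℤ) ((i.val : ℤ) + 1) ((k.val : ℤ)) (by omega) (by omega)]
  by_cases h : i = k
  · rw [if_pos h, if_pos (by rw [h])]
  · rw [if_neg h, if_neg (fun hc => h (Fin.ext (by omega)))]

/-- `∑_j C i j · (L·f)_j = n · f i`. -/
lemma cinv (n : ℕ) (hn : 3 ≤ n) (f : Fin (n - 1) → ℤ) (i : Fin (n - 1)) :
    (∑ j : Fin (n - 1), Cfun n i j * (cycleLaplacianMinorZ n).mulVec f j)
      = (n : ℤ) * f i := by
  have h1 : ∀ j : Fin (n - 1), Cfun n i j * (cycleLaplacianMinorZ n).mulVec f j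
      = ∑ k : Fin (n - 1), Cfun n i j * cycleLaplacianMinorZ n j k * f k := by
    intro j
    simp only [Matrix.mulVec, dotProduct, Finset.mul_sum]
    apply Finset.sum_congr rfl
    intro x _; ring
  rw [Finset.sum_congr rfl (fun j _ => h1 j), Finset.sum_comm]
  have h2 : ∀ k : Fin (n - 1),
      (∑ j : Fin (n - 1), Cfun n i j * cycleLaplacianMinorZ n j k * f k)
        = (if i = k then (n : ℤ) else 0) * f k := by
    intro k
    rw [← Finset.sum_mul, star n hn]
  rw [Finset.sum_congr rfl (fun k _ => h2 k)]
  simp [Finset.sum_ite_eq, ite_mul]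

end CycleAux


/-- `λ ↦ L_{n,cyc}·λ` is a bijection from the integer points of the
cone `{λ : L_{n,cyc}·λ ≥ 0}` onto `{d ∈ ℕ^{n−1} : n ∣ Σ_{j=1}^{n−1} (n−j)·dⱼ}`. -/
theorem cycle_cone_bijection (n : ℕ) (hn : 3 ≤ n) :
    Set.BijOn (fun lam : Fin (n - 1) → ℤ => (cycleLaplacianMinorZ n).mulVec lam)
      {lam : Fin (n - 1) → ℤ | ∀ i, 0 ≤ (cycleLaplacianMinorZ n).mulVec lam i}
      {d : Fin (n - 1) → ℤ | (∀ j, 0 ≤ d j) ∧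
        (n : ℤ) ∣ ∑ j : Fin (n - 1), ((n : ℤ) - ((j.val : ℤ) + 1)) * d j} := by
  have hm : 0 < n - 1 := by omega
  have hnz : (n : ℤ) ≠ 0 := by exact_mod_cast (by omega : n ≠ 0)
  have hC0 : ∀ j : Fin (n - 1), CycleAux.Cfun n ⟨0, hm⟩ j = (n : ℤ) - ((j.val : ℤ) + 1) := by
    intro j
    unfold CycleAux.Cfun
    have h1 : min (((⟨0, hm⟩ : Fin (n - 1)).val : ℤ) + 1) ((j.val : ℤ) + 1) = 1 := by
      simp only [Fin.val_mk, Nat.cast_zero, zero_add]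
      rw [min_eq_left (by omega)]
    rw [h1]
    simp only [Fin.val_mk, Nat.cast_zero, zero_add]
    ring
  refine ⟨?_, ?_, ?_⟩
  · -- MapsTo
    intro lam hlam
    refine ⟨hlam, lam ⟨0, hm⟩, ?_⟩
    rw [← CycleAux.cinv n hn lam ⟨0, hm⟩]
    exact Finset.sum_congr rfl (fun j _ => by rw [hC0 j])
  · -- InjOn
    intro a _ b _ hab
    simp only at hab
    funext i
    apply mul_left_cancel₀ hnz
    rw [← CycleAux.cinv n hn a i, ← CycleAux.cinv n hn b i, hab]
  · -- SurjOn
    intro d hd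
    obtain ⟨hd0, K, hK⟩ := hd
    set lam : Fin (n - 1) → ℤ := fun i => (∑ j, CycleAux.Cfun n i j * d j) / (n : ℤ) with hlamdef
    have hdn : ∀ i, (n : ℤ) * lam i = ∑ j, CycleAux.Cfun n i j * d j := by
      intro i
      apply Int.mul_ediv_cancel'
      have h1 : (∑ j, CycleAux.Cfun n i j * d j)
          = (n : ℤ) * (∑ j, min ((i.val : ℤ) + 1) ((j.val : ℤ) + 1) * d j)
            - ((i.val : ℤ) + 1) * (∑ j, ((j.val : ℤ) + 1) * d j) := by
        rw [Finset.mul_sum, Finset.mul_sum, ← Finset.sum_sub_distrib]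
        exact Finset.sum_congr rfl (fun j _ => by unfold CycleAux.Cfun; ring)
      have h2 : (∑ j, ((j.val : ℤ) + 1) * d j)
          = (n : ℤ) * (∑ j, d j) - (n : ℤ) * K := by
        rw [← hK, Finset.mul_sum, ← Finset.sum_sub_distrib]
        exact Finset.sum_congr rfl (fun j _ => by ring)
      exact ⟨(∑ j, min ((i.val : ℤ) + 1) ((j.val : ℤ) + 1) * d j)
          - ((i.val : ℤ) + 1) * (∑ j, d j) + ((i.val : ℤ) + 1) * K,
        by rw [h1, h2]; ring⟩
    have hLd : (cycleLaplacianMinorZ n).mulVec lam = d := by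
      funext k
      apply mul_left_cancel₀ hnz
      have h1 : (n : ℤ) * (cycleLaplacianMinorZ n).mulVec lam k
          = ∑ j, cycleLaplacianMinorZ n k j * ((n : ℤ) * lam j) := by
        simp only [Matrix.mulVec, dotProduct, Finset.mul_sum]
        exact Finset.sum_congr rfl (fun j _ => by ring)
      rw [h1]
      have h2 : ∀ j, cycleLaplacianMinorZ n k j * ((n : ℤ) * lam j)
          = ∑ t, CycleAux.Cfun n t j * cycleLaplacianMinorZ n j k * d t := by
        intro j
        rw [hdn j, Finset.mul_sum]
        refine Finset.sum_congr rfl (fun t _ => ?_)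
        rw [CycleAux.L_symm n k j, CycleAux.Cfun_symm n j t]
        ring
      rw [Finset.sum_congr rfl (fun j _ => h2 j), Finset.sum_comm]
      have h3 : ∀ t, (∑ j, CycleAux.Cfun n t j * cycleLaplacianMinorZ n j k * d t)
          = (if t = k then (n : ℤ) else 0) * d t := by
        intro t
        rw [← Finset.sum_mul, CycleAux.star n hn]
      rw [Finset.sum_congr rfl (fun t _ => h3 t)]
      simp [Finset.sum_ite_eq', ite_mul]
    exact ⟨lam, fun i => by rw [hLd]; exact hd0 i, hLd⟩
end

section
/- Let n ≥ 3 and let Lₙ be the n×n integer matrix with rows and columns indexed by 0, …, n−1 given by: (Lₙ)_{0,0} = 3, (Lₙ)_{i,i} = 2 for 1 ≤ i ≤ n−1, (Lₙ)_{i,j} = −1 when |i−j| = 1 or {i,j} = {0, n−1}, and 0 otherwise. Define the rational n×n matrix B = (b_{i,j}) by b_{i,j} = i(n−j)/n + 1 if i ≤ j and b_{i,j} = j(n−i)/n + 1 if i > j, for 0 ≤ i, j ≤ n−1. Then Lₙ·B = I; that is, Lₙ is invertible with Lₙ⁻¹ = B. In particular, every entry of the 0-th row and of the 0-th column of Lₙ⁻¹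 equals 1. -/
set_option maxHeartbeats 4000000

/-- The Laplacian minor (at the leaf) of the leafed `n`-cycle, over `ℚ`:
`(Lₙ)₀₀ = 3`, diagonal `2` elsewhere, `−1` between cyclically adjacent vertices. -/
def leafedCycleLaplacianMinorQ (n : ℕ) : Matrix (Fin n) (Fin n) ℚ :=
  Matrix.of fun i j =>
    if i = j then (if i.val = 0 then 3 else 2)
    else if i.val + 1 = j.val ∨ j.val + 1 = i.val ∨
        (i.val = 0 ∧ j.val = n - 1) ∨ (j.val = 0 ∧ i.val = n - 1) then -1
    else 0

/-- The inverse of the Laplacian minor of the leafed `n`-cycle is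
`b_{i,j} = i(n−j)/n + 1` for `i ≤ j` and `j(n−i)/n + 1` for `i > j`;
in particular every entry of its `0`-th row and `0`-th column equals `1`. -/
theorem leafed_cycle_laplacian_minor_inverse (n : ℕ) (hn : 3 ≤ n) :
    leafedCycleLaplacianMinorQ n *
        (Matrix.of fun i j : Fin n =>
          if i.val ≤ j.val then (i.val : ℚ) * ((n : ℚ) - (j.val : ℚ)) / (n : ℚ) + 1
          else (j.val : ℚ) * ((n : ℚ) - (i.val : ℚ)) / (n : ℚ) + 1) = 1 ∧
    (∀ j : Fin n,
      (Matrix.of fun i j : Fin n =>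
          if i.val ≤ j.val then (i.val : ℚ) * ((n : ℚ) - (j.val : ℚ)) / (n : ℚ) + 1
          else (j.val : ℚ) * ((n : ℚ) - (i.val : ℚ)) / (n : ℚ) + 1)
        ⟨0, by omega⟩ j = 1) ∧
    (∀ i : Fin n,
      (Matrix.of fun i j : Fin n =>
          if i.val ≤ j.val then (i.val : ℚ) * ((n : ℚ) - (j.val : ℚ)) / (n : ℚ) + 1
          else (j.val : ℚ) * ((n : ℚ) - (i.val : ℚ)) / (n : ℚ) + 1)
        i ⟨0, by omega⟩ = 1) := by
  have hn0 : (n : ℚ) ≠ 0 := Nat.cast_ne_zero.mpr (by omega)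
  have hc1 : ((n - 1 : ℕ) : ℚ) = (n : ℚ) - 1 := by
    push_cast [Nat.cast_sub (show 1 ≤ n by omega)]; ring
  have hc2 : ((n - 2 : ℕ) : ℚ) = (n : ℚ) - 2 := by
    push_cast [Nat.cast_sub (show 2 ≤ n by omega)]; ring
  refine ⟨?_, ?_, ?_⟩
  · ext i j
    rw [Matrix.mul_apply, Matrix.one_apply]
    have hjlt := j.isLt
    have hilt := i.isLt
    by_cases h0 : i.val = 0
    · -- row 0 : support {i, 1, n-1}
      set S : Finset (Fin n) := {i, ⟨1, by omega⟩, ⟨n-1, by omega⟩} with hS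
      rw [← Finset.sum_subset (Finset.subset_univ S)
        (fun k _ hk => by
          have hklt := k.isLt
          simp only [hS, Finset.mem_insert, Finset.mem_singleton, Fin.ext_iff] at hk
          push_neg at hk
          simp only [leafedCycleLaplacianMinorQ, Matrix.of_apply, Fin.ext_iff]
          rw [if_neg (by omega), if_neg (by omega), zero_mul])]
      rw [hS, Finset.sum_insert (by simp only [Finset.mem_insert, Finset.mem_singleton, Fin.ext_iff]; omega),
        Finset.sum_insert (by simp only [Finset.mem_insert, Finset.mem_singleton, Fin.ext_iff]; omega), Finset.sum_singleton]
      simp only [leafedCycleLaplacianMinorQ, Matrix.of_apply, Fin.ext_iff, eq_self_iff_true,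
        and_true, true_and, and_false, false_and, or_true, true_or, or_false, false_or]
      rcases show j.val = 0 ∨ j.val = n - 1 ∨ (1 ≤ j.val ∧ j.val ≤ n - 2) by omega
        with hj | hj | hj
      · split_ifs <;> push_cast [h0, hj, hc1, hc2] <;>
          first | omega | (field_simp; ring)
      · split_ifs <;> push_cast [h0, hj, hc1, hc2] <;>
          first | omega | (field_simp; ring)
      · split_ifs <;> push_cast [h0, hc1, hc2] <;>
          first | omega | (field_simp; ring)
    · by_cases h1 : i.val = n - 1
      · set S : Finset (Fin n) := {⟨0, by omega⟩, ⟨n-2, by omega⟩, i} with hS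
        rw [← Finset.sum_subset (Finset.subset_univ S)
          (fun k _ hk => by
            have hklt := k.isLt
            simp only [hS, Finset.mem_insert, Finset.mem_singleton, Fin.ext_iff] at hk
            push_neg at hk
            simp only [leafedCycleLaplacianMinorQ, Matrix.of_apply, Fin.ext_iff]
            rw [if_neg (by omega), if_neg (by omega), zero_mul])]
        rw [hS, Finset.sum_insert (by simp only [Finset.mem_insert, Finset.mem_singleton, Fin.ext_iff]; omega),
          Finset.sum_insert (by simp only [Finset.mem_insert, Finset.mem_singleton, Fin.ext_iff]; omega), Finset.sum_singleton]
        simp only [leafedCycleLaplacianMinorQ, Matrix.of_apply, Fin.ext_iff, eq_self_iff_true,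
          and_true, true_and, and_false, false_and, or_true, true_or, or_false, false_or]
        rcases show j.val = n - 2 ∨ j.val = n - 1 ∨ j.val ≤ n - 3 by omega
          with hj | hj | hj
        · split_ifs <;> push_cast [h1, hj, hc1, hc2] <;>
            first | omega | (field_simp; ring)
        · split_ifs <;> push_cast [h1, hj, hc1, hc2] <;>
            first | omega | (field_simp; ring)
        · split_ifs <;> push_cast [h1, hc1, hc2] <;>
            first | omega | (field_simp; ring)
      · -- middle row : support {i-1, i, i+1}
        obtain ⟨m, hm⟩ : ∃ m, i.val = m + 1 := ⟨i.val - 1, by omega⟩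
        set S : Finset (Fin n) := {⟨i.val - 1, by omega⟩, i, ⟨i.val + 1, by omega⟩} with hS
        rw [← Finset.sum_subset (Finset.subset_univ S)
          (fun k _ hk => by
            have hklt := k.isLt
            simp only [hS, Finset.mem_insert, Finset.mem_singleton, Fin.ext_iff] at hk
            push_neg at hk
            simp only [leafedCycleLaplacianMinorQ, Matrix.of_apply, Fin.ext_iff]
            rw [if_neg (by omega), if_neg (by omega), zero_mul])]
        rw [hS, Finset.sum_insert (by simp only [Finset.mem_insert, Finset.mem_singleton, Fin.ext_iff]; omega),
          Finset.sum_insert (by simp only [Finset.mem_insert, Finset.mem_singleton, Fin.ext_iff]; omega), Finset.sum_singleton]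
        simp only [leafedCycleLaplacianMinorQ, Matrix.of_apply, Fin.ext_iff, eq_self_iff_true,
          and_true, true_and, and_false, false_and, or_true, true_or, or_false, false_or]
        rcases show j.val = m ∨ j.val = m + 1 ∨ j.val = m + 2 ∨
            (j.val + 1 ≤ m ∨ m + 3 ≤ j.val) by omega with hj | hj | hj | hj
        · split_ifs <;> push_cast [hm, hj, Nat.add_sub_cancel, hc1, hc2] <;>
            first | omega | (field_simp; ring)
        · split_ifs <;> push_cast [hm, hj, Nat.add_sub_cancel, hc1, hc2] <;>
            first | omega | (field_simp; ring)
        · split_ifs <;> push_cast [hm, hj, Nat.add_sub_cancel, hc1, hc2] <;>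
            first | omega | (field_simp; ring)
        · split_ifs <;> push_cast [hm, Nat.add_sub_cancel, hc1, hc2] <;>
            first | omega | (field_simp; ring)
  · intro j
    have h : ((⟨0, by omega⟩ : Fin n) : ℕ) = 0 := rfl
    rw [Matrix.of_apply, if_pos (by simp only [h]; omega)]
    simp [h]
  · intro i
    have h : ((⟨0, by omega⟩ : Fin n) : ℕ) = 0 := rfl
    rcases Nat.eq_zero_or_pos i.val with h0 | h0
    · simp [Matrix.of_apply, h, h0]
    · rw [Matrix.of_apply, if_neg (by simp only [h]; omega)]
      simp [h]
end

section
/- Let n ≥ 3 and let Lₙ be the n×n Laplacian minor of the leafed n-cycle. Let c ∈ ℤⁿ be a vector whose entries satisfy 0 ≤ cⱼ ≤ n−1 for all j, and let x = Lₙ⁻¹·c ∈ ℚⁿ with coordinates x₀, x₁, …, x_{n−1}. If x₁ is an integer, then every coordinate of x is an integer. -/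
/-- The inverse of the Laplacian minor (at the leaf) of the leafed `n`-cycle:
`b_{i,j} = i(n−j)/n + 1` if `i ≤ j` and `j(n−i)/n + 1` if `i > j`, `0 ≤ i,j ≤ n−1`. -/
def leafedCycleLaplacianMinorInv (n : ℕ) : Matrix (Fin n) (Fin n) ℚ :=
  Matrix.of fun i j =>
    if i.val ≤ j.val then (i.val : ℚ) * ((n : ℚ) - (j.val : ℚ)) / (n : ℚ) + 1
    else (j.val : ℚ) * ((n : ℚ) - (i.val : ℚ)) / (n : ℚ) + 1

/-- If `c ∈ ℤⁿ` has entries in `{0, …, n−1}` and `x = Lₙ⁻¹·c` has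
integral coordinate `x₁`, then every coordinate of `x` is integral. -/
theorem leafed_cycle_fpp_integrality (n : ℕ) (hn : 3 ≤ n)
    (c : Fin n → ℤ) (hc : ∀ j, 0 ≤ c j ∧ c j ≤ (n : ℤ) - 1)
    (h1 : ∃ z : ℤ,
      (leafedCycleLaplacianMinorInv n).mulVec (fun j => (c j : ℚ)) ⟨1, by omega⟩ = (z : ℚ)) :
    ∀ k : Fin n, ∃ z : ℤ,
      (leafedCycleLaplacianMinorInv n).mulVec (fun j => (c j : ℚ)) k = (z : ℚ) := by
  have hn0 : (n : ℚ) ≠ 0 := by positivity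
  set S : Fin n → ℤ := fun k =>
    ∑ j : Fin n, (if (k : ℕ) ≤ (j : ℕ) then ((k : ℕ) : ℤ) * ((n : ℤ) - (j : ℕ))
      else ((j : ℕ) : ℤ) * ((n : ℤ) - (k : ℕ))) * c j with hS
  set C : ℤ := ∑ j, c j with hC
  set T : ℤ := ∑ j : Fin n, ((j : ℕ) : ℤ) * c j with hT
  have key : ∀ k : Fin n, (leafedCycleLaplacianMinorInv n).mulVec (fun j => (c j : ℚ)) k
      = (S k : ℚ) / n + (C : ℚ) := by
    intro k
    simp only [Matrix.mulVec, leafedCycleLaplacianMinorInv, dotProduct, Matrix.of_apply,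
      hS, hC]
    push_cast
    rw [Finset.sum_div, ← Finset.sum_add_distrib]
    apply Finset.sum_congr rfl
    intro j _
    split_ifs <;> field_simp <;> ring
  have hdvd : ∀ k : Fin n, (n : ℤ) ∣ S k + ((k : ℕ) : ℤ) * T := by
    intro k
    have : S k + ((k : ℕ) : ℤ) * T = ∑ j : Fin n,
        ((if (k : ℕ) ≤ (j : ℕ) then ((k : ℕ) : ℤ) * ((n : ℤ) - (j : ℕ))
          else ((j : ℕ) : ℤ) * ((n : ℤ) - (k : ℕ))) * c j
          + ((k : ℕ) : ℤ) * (((j : ℕ) : ℤ) * c j)) := by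
      rw [hS, hT, Finset.mul_sum, ← Finset.sum_add_distrib]
    rw [this]
    apply Finset.dvd_sum
    intro j _
    split_ifs
    · exact ⟨((k : ℕ) : ℤ) * c j, by ring⟩
    · exact ⟨((j : ℕ) : ℤ) * c j, by ring⟩
  obtain ⟨z, hz⟩ := h1
  have h1' : (n : ℤ) ∣ S ⟨1, by omega⟩ := by
    rw [key ⟨1, by omega⟩] at hz
    have : (S ⟨1, by omega⟩ : ℚ) = n * ((z : ℚ) - C) := by
      field_simp at hz ⊢; linarith
    have hint : (S ⟨1, by omega⟩ : ℤ) = n * (z - C) := by exact_mod_cast this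
    exact ⟨z - C, hint⟩
  have hT' : (n : ℤ) ∣ T := by
    have := hdvd ⟨1, by omega⟩
    simp only [Fin.val_mk, Nat.cast_one, one_mul] at this
    exact (Int.dvd_add_right h1').mp this
  intro k
  have hSk : (n : ℤ) ∣ S k := by
    have h2 : (n : ℤ) ∣ ((k : ℕ) : ℤ) * T := hT'.mul_left _
    have h3 : S k = (S k + ((k : ℕ) : ℤ) * T) - ((k : ℕ) : ℤ) * T := by ring
    rw [h3]; exact dvd_sub (hdvd k) h2
  obtain ⟨m, hm⟩ := hSk
  refine ⟨m + C, ?_⟩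
  rw [key k, hm]
  push_cast
  field_simp
end

section
/- Let n ≥ 3 be a prime and let m be a positive integer with gcd(m, n) = 1 (equivalently, n does not divide m). Let Lₙ be the n×n Laplacian minor of the leafed n-cycle. Then the number of integer vectors λ ∈ ℤⁿ satisfying Lₙ·λ ≥ 0 componentwise and λ₀ = m equals the number of equivalence classes of compositions of m into n nonnegative parts under cyclic shift; that is, it equals the cardinality of the quotient of the set {c : ℤ/nℤ → ℕ : Σⱼ c(j) = m} by the equivalence relation c ∼ c′ iff there exists k ∈ ℤ/nℤ with c′(j) = c(j+k) for all j. -/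
def leafedCycleLaplacianMinor (n : ℕ) : Matrix (Fin n) (Fin n) ℤ :=
  Matrix.of fun i j =>
    if i = j then (if i.val = 0 then 3 else 2)
    else if i.val + 1 = j.val ∨ j.val + 1 = i.val ∨
        (i.val = 0 ∧ j.val = n - 1) ∨ (j.val = 0 ∧ i.val = n - 1) then -1
    else 0

namespace LCaux

variable {n : ℕ} [NeZero n]

lemma val_one (hn : 3 ≤ n) : ((1 : Fin n)).val = 1 := by
  rw [Fin.val_one']; exact Nat.mod_eq_of_lt (by omega)

lemma add_one_val (hn : 3 ≤ n) (i : Fin n) :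
    (i + 1).val = if i.val = n - 1 then 0 else i.val + 1 := by
  have h1 := val_one hn
  rw [Fin.add_def]
  simp only [h1]
  have hi := i.isLt
  split
  · next h => rw [h]; have : n - 1 + 1 = n := by omega
              rw [this, Nat.mod_self]
  · next h => exact Nat.mod_eq_of_lt (by omega)

lemma sub_one_val (hn : 3 ≤ n) (i : Fin n) :
    (i - 1).val = if i.val = 0 then n - 1 else i.val - 1 := by
  have h1 := val_one hn
  rw [Fin.sub_def]
  simp only [h1]
  have hi := i.isLt
  split
  · next h => rw [h]; rw [Nat.add_zero, Nat.mod_eq_of_lt (by omega)]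
  · next h => have : n - 1 + i.val = n + (i.val - 1) := by omega
              rw [this, Nat.add_mod_left, Nat.mod_eq_of_lt (by omega)]

lemma mulVec_apply (hn : 3 ≤ n) (lam : Fin n → ℤ) (i : Fin n) :
    (leafedCycleLaplacianMinor n).mulVec lam i
      = (if i.val = 0 then 3 else 2) * lam i - lam (i + 1) - lam (i - 1) := by
  have hi := i.isLt
  have hp1 := add_one_val hn i
  have hm1 := sub_one_val hn i
  have hne1 : i + 1 ≠ i := by
    intro h; apply_fun Fin.val at h; rw [hp1] at h; split at h <;> omega
  have hne2 : i - 1 ≠ i := by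
    intro h; apply_fun Fin.val at h; rw [hm1] at h; split at h <;> omega
  have hne3 : i + 1 ≠ i - 1 := by
    intro h; apply_fun Fin.val at h; rw [hp1, hm1] at h
    split at h <;> split at h <;> omega
  have key : ∀ j : Fin n, (leafedCycleLaplacianMinor n) i j * lam j =
      (if j = i then (if i.val = 0 then 3 else 2) * lam i else 0)
      + (if j = i + 1 then -lam j else 0) + (if j = i - 1 then -lam j else 0) := by
    intro j
    have hj := j.isLt
    show (Matrix.of _ : Matrix (Fin n) (Fin n) ℤ) i j * lam j = _
    rw [Matrix.of_apply]
    rcases eq_or_ne j i with rfl | h1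
    · rw [if_pos rfl, if_pos rfl, if_neg (Ne.symm hne1), if_neg (Ne.symm hne2)]
      ring
    · rcases eq_or_ne j (i + 1) with rfl | h2
      · have hcond : i.val + 1 = (i+1).val ∨ (i+1).val + 1 = i.val ∨
            (i.val = 0 ∧ (i+1).val = n - 1) ∨ ((i+1).val = 0 ∧ i.val = n - 1) := by
          rw [hp1]; split <;> omega
        rw [if_neg (fun h => h1 h.symm), if_pos hcond, if_neg h1, if_pos rfl,
          if_neg hne3]
        ring
      · rcases eq_or_ne j (i - 1) with rfl | h3
        · have hcond : i.val + 1 = (i-1).val ∨ (i-1).val + 1 = i.val ∨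
              (i.val = 0 ∧ (i-1).val = n - 1) ∨ ((i-1).val = 0 ∧ i.val = n - 1) := by
            rw [hm1]; split <;> omega
          rw [if_neg (fun h => h1 h.symm), if_pos hcond, if_neg h1, if_neg hne3.symm,
            if_pos rfl]
          ring
        · have hcond : ¬ (i.val + 1 = j.val ∨ j.val + 1 = i.val ∨
              (i.val = 0 ∧ j.val = n - 1) ∨ (j.val = 0 ∧ i.val = n - 1)) := by
            intro hc
            have hvp : j.val ≠ (i+1).val := fun h => h2 (Fin.ext h)
            have hvm : j.val ≠ (i-1).val := fun h => h3 (Fin.ext h)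
            rw [hp1] at hvp; rw [hm1] at hvm
            rcases hc with h | h | h | h
            · apply hvp; split <;> omega
            · apply hvm; split <;> omega
            · apply hvm; split <;> omega
            · apply hvp; split <;> omega
          rw [if_neg (fun h => h1 h.symm), if_neg hcond, if_neg h1, if_neg h2, if_neg h3]
          ring
  rw [Matrix.mulVec]
  show dotProduct _ lam = _
  rw [dotProduct]
  simp only [key]
  rw [Finset.sum_add_distrib, Finset.sum_add_distrib,
    Finset.sum_ite_eq' Finset.univ i, Finset.sum_ite_eq' Finset.univ (i+1),
    Finset.sum_ite_eq' Finset.univ (i-1)]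
  simp only [Finset.mem_univ, if_pos]
  ring

/-- reindex sums by +1 -/
lemma sum_shift (f g : Fin n → ℤ) (h : ∀ i, f i = g (i + 1)) :
    ∑ i, f i = ∑ i, g i :=
  Fintype.sum_equiv (Equiv.addRight 1) f g h

lemma diag_split (hn : 3 ≤ n) (lam : Fin n → ℤ) (i : Fin n) :
    (if i.val = 0 then (3:ℤ) else 2) * lam i
      = 2 * lam i + (if i = 0 then lam i else 0) := by
  have h0 : (0 : Fin n).val = 0 := Fin.val_zero n
  by_cases h : i.val = 0
  · rw [if_pos h, if_pos (Fin.ext (by rw [h, h0]))]; ring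
  · rw [if_neg h, if_neg (fun hh => h (by rw [hh, h0]))]; ring

lemma sum_mulVec (hn : 3 ≤ n) (lam : Fin n → ℤ) :
    ∑ i, (leafedCycleLaplacianMinor n).mulVec lam i = lam 0 := by
  simp only [mulVec_apply hn, diag_split hn]
  rw [Finset.sum_sub_distrib, Finset.sum_sub_distrib, Finset.sum_add_distrib,
    Finset.sum_ite_eq' Finset.univ (0 : Fin n)]
  have e1 : ∑ i, lam (i + 1) = ∑ i, lam i :=
    Fintype.sum_equiv (Equiv.addRight 1) _ lam (fun i => rfl)
  have e2 : ∑ i, lam (i - 1) = ∑ i, lam i :=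
    Fintype.sum_equiv (Equiv.subRight 1) _ lam (fun i => rfl)
  rw [e1, e2, ← Finset.mul_sum]
  simp only [Finset.mem_univ, if_pos]
  ring


set_option maxHeartbeats 1000000 in
lemma wsum_mulVec (hn : 3 ≤ n) (lam : Fin n → ℤ) :
    ∑ i, (i.val : ℤ) * (leafedCycleLaplacianMinor n).mulVec lam i
      = (n : ℤ) * (lam ⟨n - 1, by omega⟩ - lam 0) := by
  simp only [mulVec_apply hn]
  have pt : ∀ i : Fin n, (i.val : ℤ) *
      ((if i.val = 0 then (3:ℤ) else 2) * lam i - lam (i + 1) - lam (i - 1))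
      = 2 * i.val * lam i - (i.val : ℤ) * lam (i + 1) - (i.val : ℤ) * lam (i - 1) := by
    intro i
    by_cases h : i.val = 0
    · rw [if_pos h, h]; push_cast; ring
    · rw [if_neg h]; ring
  simp only [pt]
  have e1 : ∑ i, (i.val : ℤ) * lam (i + 1)
      = ∑ i, (((i - 1 : Fin n).val : ℤ)) * lam i := by
    apply Fintype.sum_equiv (Equiv.addRight 1)
    intro i
    simp only [Equiv.coe_addRight, add_sub_cancel_right]
  have e2 : ∑ i, (i.val : ℤ) * lam (i - 1)
      = ∑ i, (((i + 1 : Fin n).val : ℤ)) * lam i := by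
    apply Fintype.sum_equiv (Equiv.subRight 1)
    intro i
    simp only [Equiv.subRight_apply, sub_add_cancel]
  have m1 : ∀ i : Fin n, (((i - 1 : Fin n).val : ℤ)) * lam i
      = ((i.val : ℤ) - 1) * lam i + (if i = 0 then (n : ℤ) * lam i else 0) := by
    intro i
    rw [sub_one_val hn]
    by_cases h : i.val = 0
    · rw [if_pos h, if_pos (Fin.ext (by rw [h, Fin.val_zero n])), h]
      push_cast [Nat.cast_sub (by omega : 1 ≤ n)]; ring
    · rw [if_neg h, if_neg (fun hh => h (by rw [hh, Fin.val_zero n]))]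
      have : ((i.val - 1 : ℕ) : ℤ) = (i.val : ℤ) - 1 := by
        have := i.isLt; push_cast [Nat.cast_sub (by omega : 1 ≤ i.val)]; ring
      rw [this]; ring
  have p1 : ∀ i : Fin n, (((i + 1 : Fin n).val : ℤ)) * lam i
      = ((i.val : ℤ) + 1) * lam i - (if i = (⟨n - 1, by omega⟩ : Fin n) then (n : ℤ) * lam i else 0) := by
    intro i
    rw [add_one_val hn]
    by_cases h : i.val = n - 1
    · rw [if_pos h, if_pos (Fin.ext (by rw [h]))]
      push_cast [h, Nat.cast_sub (by omega : 1 ≤ n)]; ring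
    · rw [if_neg h, if_neg (fun hh => h (by rw [hh]))]
      push_cast; ring
  simp only [m1] at e1
  simp only [p1] at e2
  rw [Finset.sum_sub_distrib, Finset.sum_sub_distrib, e1, e2,
    Finset.sum_add_distrib, Finset.sum_sub_distrib,
    Finset.sum_ite_eq' Finset.univ (0 : Fin n),
    Finset.sum_ite_eq' Finset.univ (⟨n - 1, by omega⟩ : Fin n)]
  simp only [Finset.mem_univ, if_pos]
  have expand : ∀ i : Fin n, (2 * (i.val : ℤ) * lam i)
      = ((i.val : ℤ) - 1) * lam i + ((i.val : ℤ) + 1) * lam i := by intro i; ring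
  rw [Finset.sum_congr rfl (fun i _ => expand i), Finset.sum_add_distrib]
  ring

/-- quadratic form identity -/
lemma quad_mulVec (hn : 3 ≤ n) (lam : Fin n → ℤ) :
    ∑ i, lam i * (leafedCycleLaplacianMinor n).mulVec lam i
      = lam 0 ^ 2 + ∑ i, (lam i - lam (i + 1)) ^ 2 := by
  simp only [mulVec_apply hn]
  have pt : ∀ i : Fin n, lam i *
      ((if i.val = 0 then (3:ℤ) else 2) * lam i - lam (i + 1) - lam (i - 1))
      = (2 * lam i ^ 2 + (if i = 0 then lam i ^ 2 else 0))
        - lam i * lam (i + 1) - lam i * lam (i - 1) := by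
    intro i
    by_cases h : i.val = 0
    · rw [if_pos h, if_pos (Fin.ext (by rw [h, Fin.val_zero n]))]; ring
    · rw [if_neg h, if_neg (fun hh => h (by rw [hh, Fin.val_zero n]))]; ring
  simp only [pt]
  have e2 : ∑ i, lam i * lam (i - 1) = ∑ i, lam (i + 1) * lam i := by
    apply Fintype.sum_equiv (Equiv.subRight 1)
    intro i
    simp only [Equiv.subRight_apply, sub_add_cancel]
  have e3 : ∑ i, (lam i - lam (i + 1)) ^ 2
      = ∑ i, (lam i ^ 2 + lam (i + 1) ^ 2 - 2 * (lam i * lam (i + 1))) := by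
    apply Finset.sum_congr rfl; intro i _; ring
  have e4 : ∑ i, lam (i + 1) ^ 2 = ∑ i, lam i ^ 2 :=
    Fintype.sum_equiv (Equiv.addRight 1) _ (fun i => lam i ^ 2) (fun i => rfl)
  rw [Finset.sum_sub_distrib, Finset.sum_sub_distrib, Finset.sum_add_distrib,
    Finset.sum_ite_eq' Finset.univ (0 : Fin n), e2, e3,
    Finset.sum_sub_distrib, Finset.sum_add_distrib, e4]
  simp only [Finset.mem_univ, if_pos]
  rw [← Finset.mul_sum, ← Finset.mul_sum]
  have : ∑ i, lam (i+1) * lam i = ∑ i, lam i * lam (i+1) := by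
    apply Finset.sum_congr rfl; intro i _; ring
  rw [this]
  ring

/-- constancy from shift-invariance -/
lemma const_of_shift (f : Fin n → ℤ) (h : ∀ i, f i = f (i + 1)) (i : Fin n) :
    f i = f 0 := by
  have hn' : 0 < n := Nat.pos_of_ne_zero (NeZero.ne n)
  suffices H : ∀ k : ℕ, ∀ hk : k < n, f ⟨k, hk⟩ = f 0 by
    have : i = ⟨i.val, i.isLt⟩ := by apply Fin.ext; rfl
    rw [this]; exact H i.val i.isLt
  intro k
  induction k with
  | zero =>
    intro hk
    have h0 : (⟨0, hk⟩ : Fin n) = 0 := Fin.ext (by rw [Fin.val_zero n])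
    rw [h0]
  | succ k ih =>
    intro hk
    have hk' : k < n := by omega
    have h1n : 1 % n = 1 := Nat.mod_eq_of_lt (by omega)
    have step : (⟨k, hk'⟩ : Fin n) + 1 = ⟨k + 1, hk⟩ := by
      apply Fin.ext
      rw [Fin.add_def, Fin.val_one' n]
      show (k + 1 % n) % n = k + 1
      rw [h1n]
      exact Nat.mod_eq_of_lt hk
    rw [← step, ← h ⟨k, hk'⟩]
    exact ih hk'

/-- kernel of L is trivial -/
lemma mulVec_eq_zero (hn : 3 ≤ n) (lam : Fin n → ℤ)
    (h : ∀ i, (leafedCycleLaplacianMinor n).mulVec lam i = 0) : lam = 0 := by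
  have hq := quad_mulVec hn lam
  simp only [h, mul_zero, Finset.sum_const_zero] at hq
  have hsq : ∀ i ∈ Finset.univ, (0:ℤ) ≤ (lam i - lam (i + 1)) ^ 2 :=
    fun i _ => sq_nonneg _
  have h0 : lam 0 = 0 ∧ ∀ i : Fin n, lam i = lam (i + 1) := by
    constructor
    · nlinarith [sq_nonneg (lam 0), Finset.sum_nonneg hsq]
    · intro i
      have hall : ∀ j ∈ Finset.univ, (lam j - lam (j + 1)) ^ 2 = 0 := by
        intro j _
        have hsum : ∑ i, (lam i - lam (i + 1)) ^ 2 = 0 := by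
          nlinarith [sq_nonneg (lam 0), Finset.sum_nonneg hsq]
        have := (Finset.sum_eq_zero_iff_of_nonneg hsq).mp hsum j (Finset.mem_univ j)
        exact this
      have := hall i (Finset.mem_univ i)
      have := pow_eq_zero_iff (n := 2) (by norm_num) |>.mp this
      linarith
  funext i
  rw [Pi.zero_apply, const_of_shift lam h0.2 i, h0.1]


def bfun (c : Fin n → ℤ) : ℕ → ℤ := fun t => if h : t < n then c ⟨t, h⟩ else 0

def Gfun (c : Fin n → ℤ) : ℕ → ℤ := fun k => ∑ i ∈ Finset.range k, ((k:ℤ) - (i:ℤ)) * bfun c i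

def Ffun (c : Fin n → ℤ) (D : ℤ) : ℕ → ℤ := fun k =>
  (∑ i, c i) - (k:ℤ) * (D - ((∑ i, c i) - bfun c 0)) - Gfun c k + (k:ℤ) * bfun c 0

lemma Gfun_succ (c : Fin n → ℤ) (k : ℕ) :
    Gfun c (k+1) = Gfun c k + ∑ i ∈ Finset.range (k+1), bfun c i := by
  have : ∀ i ∈ Finset.range (k+1), (((k:ℕ)+1:ℤ) - (i:ℤ)) * bfun c i
      = ((k:ℤ) - (i:ℤ)) * bfun c i + bfun c i := by intro i _; push_cast; ring
  simp only [Gfun]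
  push_cast
  rw [Finset.sum_congr rfl this, Finset.sum_add_distrib, Finset.sum_range_succ
    (fun i => ((k:ℤ) - (i:ℤ)) * bfun c i)]
  push_cast
  ring

lemma Ffun_second_diff (c : Fin n → ℤ) (D : ℤ) (j : ℕ) :
    2 * Ffun c D (j+1) - Ffun c D (j+2) - Ffun c D j = bfun c (j+1) := by
  have h1 := Gfun_succ c j
  have h2 := Gfun_succ c (j+1)
  have h3 := Finset.sum_range_succ (fun i => bfun c i) (j+1)
  simp only [Ffun]
  push_cast
  linear_combination h2 - h1 + h3

lemma Gfun_n (c : Fin n → ℤ) :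
    Gfun c n = (n:ℤ) * (∑ i, c i) - ∑ i, (i.val:ℤ) * c i := by
  have hb : ∀ i : Fin n, bfun c i.val = c i := by
    intro i; rw [bfun]; simp only [i.isLt, dif_pos]
  have e1 : ∑ i ∈ Finset.range n, bfun c i = ∑ i, c i := by
    rw [← Fin.sum_univ_eq_sum_range]
    exact Finset.sum_congr rfl fun i _ => hb i
  have e2 : ∑ i ∈ Finset.range n, (i:ℤ) * bfun c i = ∑ i, (i.val:ℤ) * c i := by
    rw [← Fin.sum_univ_eq_sum_range (fun i => (i:ℤ) * bfun c i)]
    exact Finset.sum_congr rfl fun i _ => by rw [hb i]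
  simp only [Gfun]
  have : ∀ i ∈ Finset.range n, ((n:ℤ) - (i:ℤ)) * bfun c i
      = (n:ℤ) * bfun c i - (i:ℤ) * bfun c i := by intro i _; ring
  rw [Finset.sum_congr rfl this, Finset.sum_sub_distrib, ← Finset.mul_sum, e1, e2]


lemma sum_range_b (c : Fin n → ℤ) : ∑ i ∈ Finset.range n, bfun c i = ∑ i, c i := by
  rw [← Fin.sum_univ_eq_sum_range]
  exact Finset.sum_congr rfl fun i _ => by rw [bfun]; simp only [i.isLt, dif_pos]

lemma Ffun_zero (c : Fin n → ℤ) (D : ℤ) : Ffun c D 0 = ∑ i, c i := by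
  simp [Ffun, Gfun]

lemma Ffun_one (c : Fin n → ℤ) (D : ℤ) :
    Ffun c D 1 = 2 * (∑ i, c i) - D - bfun c 0 := by
  simp [Ffun, Gfun, Finset.sum_range_one]; ring

lemma Ffun_n (c : Fin n → ℤ) (D : ℤ) (hD : (n:ℤ) * D = ∑ i, (i.val:ℤ) * c i) :
    Ffun c D n = ∑ i, c i := by
  simp only [Ffun]
  rw [Gfun_n]
  linear_combination -hD

lemma Ffun_last (hn : 3 ≤ n) (c : Fin n → ℤ) (D : ℤ)
    (hD : (n:ℤ) * D = ∑ i, (i.val:ℤ) * c i) :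
    Ffun c D (n-1) = (∑ i, c i) + D := by
  have hgs := Gfun_succ c (n-1)
  rw [show n - 1 + 1 = n from by omega] at hgs
  have hGn := Gfun_n c
  have hS := sum_range_b c
  simp only [Ffun]
  rw [Nat.cast_sub (by omega : 1 ≤ n)]
  push_cast
  linear_combination hgs - hGn + hS - hD

def Phi (c : Fin n → ℤ) (D : ℤ) : Fin n → ℤ := fun i => Ffun c D i.val

lemma mulVec_Phi (hn : 3 ≤ n) (c : Fin n → ℤ) (D : ℤ)
    (hD : (n:ℤ) * D = ∑ i, (i.val:ℤ) * c i) (i : Fin n) :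
    (leafedCycleLaplacianMinor n).mulVec (Phi c D) i = c i := by
  rw [mulVec_apply hn]
  simp only [Phi]
  have hb : bfun c i.val = c i := by rw [bfun]; simp only [i.isLt, dif_pos]
  have hp1 := add_one_val hn i
  have hm1 := sub_one_val hn i
  by_cases h0 : i.val = 0
  · have hip : (i+1).val = 1 := by rw [hp1, if_neg (by omega), h0]
    have him : (i-1).val = n - 1 := by rw [hm1, if_pos h0]
    rw [if_pos h0, hip, him, h0, ← hb, h0]
    rw [Ffun_zero, Ffun_one, Ffun_last hn c D hD]
    ring
  · by_cases hlast : i.val = n - 1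
    · have hip : (i+1).val = 0 := by rw [hp1, if_pos hlast]
      have him : (i-1).val = n - 2 := by rw [hm1, if_neg h0]; omega
      rw [if_neg h0, hip, him, hlast, ← hb, hlast]
      have hsd := Ffun_second_diff c D (n-2)
      rw [show n - 2 + 1 = n - 1 from by omega, show n - 2 + 2 = n from by omega] at hsd
      rw [Ffun_zero]
      rw [Ffun_n c D hD] at hsd
      linarith
    · have hi := i.isLt
      have hip : (i+1).val = i.val + 1 := by rw [hp1, if_neg hlast]
      have him : (i-1).val = i.val - 1 := by rw [hm1, if_neg h0]
      rw [if_neg h0, hip, him, ← hb]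
      have hsd := Ffun_second_diff c D (i.val - 1)
      rw [show i.val - 1 + 1 = i.val from by omega,
        show i.val - 1 + 2 = i.val + 1 from by omega] at hsd
      linarith


lemma Phi_zero (c : Fin n → ℤ) (D : ℤ) : Phi c D 0 = ∑ i, c i := by
  show Ffun c D (0 : Fin n).val = _
  rw [Fin.val_zero n, Ffun_zero]

/-- Step A: the cone points biject with constrained compositions. -/
lemma cardA (hn : 3 ≤ n) (m : ℕ) :
    Nat.card {lam : Fin n → ℤ |
        (∀ i, 0 ≤ (leafedCycleLaplacianMinor n).mulVec lam i) ∧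
        lam ⟨0, by omega⟩ = (m : ℤ)}
      = Nat.card {c : Fin n → ℕ // (∑ j, c j = m) ∧ (n ∣ ∑ j, j.val * c j)} := by
  have h00 : (⟨0, by omega⟩ : Fin n) = 0 := Fin.ext (Fin.val_zero n).symm
  apply Nat.card_congr
  refine
    { toFun := fun lam =>
        ⟨fun i => ((leafedCycleLaplacianMinor n).mulVec lam.1 i).toNat, ?_, ?_⟩
      invFun := fun c =>
        ⟨Phi (fun i => (c.1 i : ℤ)) ((∑ i, (i.val:ℤ) * (c.1 i : ℤ)) / n), ?_, ?_⟩
      left_inv := ?_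
      right_inv := ?_ }
  · -- sum = m
    obtain ⟨lam, hnn, h0⟩ := lam
    have : ((∑ j, ((leafedCycleLaplacianMinor n).mulVec lam j).toNat : ℕ) : ℤ) = m := by
      push_cast
      rw [Finset.sum_congr rfl (fun j _ => Int.toNat_of_nonneg (hnn j)),
        sum_mulVec hn lam, ← h00]
      exact h0
    exact_mod_cast this
  · -- divisibility
    obtain ⟨lam, hnn, h0⟩ := lam
    have key : ((∑ j, ((leafedCycleLaplacianMinor n).mulVec lam j).toNat * j.val : ℕ) : ℤ)
        = (n:ℤ) * (lam ⟨n - 1, by omega⟩ - lam 0) := by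
      push_cast
      rw [Finset.sum_congr rfl
        (fun j _ => by rw [Int.toNat_of_nonneg (hnn j)] : ∀ j ∈ Finset.univ,
          (((leafedCycleLaplacianMinor n).mulVec lam j).toNat : ℤ) * (j.val:ℤ)
          = (leafedCycleLaplacianMinor n).mulVec lam j * (j.val:ℤ))]
      rw [← wsum_mulVec hn lam]
      exact Finset.sum_congr rfl fun j _ => by ring
    have : (n:ℤ) ∣ ((∑ j, j.val * ((leafedCycleLaplacianMinor n).mulVec lam j).toNat : ℕ) : ℤ) := by
      rw [show (∑ j, j.val * ((leafedCycleLaplacianMinor n).mulVec lam j).toNat)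
        = ∑ j, ((leafedCycleLaplacianMinor n).mulVec lam j).toNat * j.val from
          Finset.sum_congr rfl fun j _ => Nat.mul_comm _ _, key]
      exact Dvd.intro _ rfl
    exact_mod_cast this
  · -- Phi lands in the cone
    intro i
    obtain ⟨c, hsum, hdvd⟩ := c
    have hD : (n:ℤ) * ((∑ i, (i.val:ℤ) * (c i : ℤ)) / n) = ∑ i, (i.val:ℤ) * (c i : ℤ) := by
      apply Int.mul_ediv_cancel'
      have : ((∑ j, j.val * c j : ℕ) : ℤ) = ∑ i, (i.val:ℤ) * (c i : ℤ) := by push_cast; rfl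
      rw [← this]
      exact_mod_cast hdvd
    rw [mulVec_Phi hn _ _ hD i]
    positivity
  · -- Phi has first coordinate m
    obtain ⟨c, hsum, hdvd⟩ := c
    rw [h00, Phi_zero]
    show (∑ i, (c i : ℤ)) = (m:ℤ)
    exact_mod_cast hsum
  · -- left inverse
    rintro ⟨lam, hnn, h0⟩
    apply Subtype.ext
    simp only []
    set c : Fin n → ℤ := fun i => (((leafedCycleLaplacianMinor n).mulVec lam i).toNat : ℤ) with hc
    have hceq : ∀ i, c i = (leafedCycleLaplacianMinor n).mulVec lam i :=
      fun i => Int.toNat_of_nonneg (hnn i)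
    have hD : (n:ℤ) * ((∑ i, (i.val:ℤ) * c i) / n) = ∑ i, (i.val:ℤ) * c i := by
      apply Int.mul_ediv_cancel'
      rw [Finset.sum_congr rfl (fun i _ => by rw [hceq i])]
      rw [wsum_mulVec hn lam]
      exact Dvd.intro _ rfl
    set mu := Phi c ((∑ i, (i.val:ℤ) * c i) / n) with hmu
    have hLmu : ∀ i, (leafedCycleLaplacianMinor n).mulVec mu i = c i :=
      fun i => mulVec_Phi hn _ _ hD i
    have hzero : mu - lam = 0 := by
      apply mulVec_eq_zero hn
      intro i
      rw [Matrix.mulVec_sub, Pi.sub_apply, hLmu i, hceq i, sub_self]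
    have := sub_eq_zero.mp hzero
    exact this
  · -- right inverse
    rintro ⟨c, hsum, hdvd⟩
    apply Subtype.ext
    simp only []
    funext i
    have hD : (n:ℤ) * ((∑ i, (i.val:ℤ) * (c i : ℤ)) / n) = ∑ i, (i.val:ℤ) * (c i : ℤ) := by
      apply Int.mul_ediv_cancel'
      have : ((∑ j, j.val * c j : ℕ) : ℤ) = ∑ i, (i.val:ℤ) * (c i : ℤ) := by push_cast; rfl
      rw [← this]
      exact_mod_cast hdvd
    rw [mulVec_Phi hn _ _ hD i]
    exact Int.toNat_natCast _


/-- cast of Fin subtraction into ZMod -/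
lemma sub_val_cast (j k : Fin n) :
    (((j - k).val : ℕ) : ZMod n) = (j.val : ZMod n) - (k.val : ZMod n) := by
  rw [Fin.sub_def]
  show (((n - k.val + j.val) % n : ℕ) : ZMod n) = _
  rw [ZMod.natCast_mod, Nat.cast_add, Nat.cast_sub k.isLt.le, ZMod.natCast_self]
  ring

/-- weighted sum in ZMod n -/
def wz (c : Fin n → ℕ) : ZMod n := ∑ j, (j.val : ZMod n) * (c j : ZMod n)

lemma wz_shift (c : Fin n → ℕ) (k : Fin n) :
    wz (fun j => c (j + k)) = wz c - (k.val : ZMod n) * ∑ j, (c j : ZMod n) := by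
  have e1 : ∑ j, (j.val : ZMod n) * (c (j + k) : ZMod n)
      = ∑ j, (((j - k).val : ℕ) : ZMod n) * (c j : ZMod n) := by
    apply Fintype.sum_equiv (Equiv.addRight k)
    intro j
    simp only [Equiv.coe_addRight, add_sub_cancel_right]
  rw [wz, e1]
  rw [Finset.sum_congr rfl (fun j _ => by rw [sub_val_cast j k])]
  rw [Finset.sum_congr rfl (fun j _ => sub_mul (j.val : ZMod n) _ _),
    Finset.sum_sub_distrib, ← Finset.mul_sum]
  rfl

lemma sum_shift_nat (c : Fin n → ℕ) (k : Fin n) :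
    ∑ j, c (j + k) = ∑ j, c j := by
  apply Fintype.sum_equiv (Equiv.addRight k)
  intro j; rfl

lemma wz_eq_zero_iff (c : Fin n → ℕ) :
    wz c = 0 ↔ n ∣ ∑ j, j.val * c j := by
  have : wz c = ((∑ j, j.val * c j : ℕ) : ZMod n) := by
    rw [wz]; push_cast; rfl
  rw [this, ZMod.natCast_eq_zero_iff]

/-- Step B -/
lemma cardB (hn : 3 ≤ n) (m : ℕ) (hnm : Nat.gcd m n = 1) :
    Nat.card {c : Fin n → ℕ // (∑ j, c j = m) ∧ (n ∣ ∑ j, j.val * c j)}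
      = Nat.card (Quot (fun c c' : {c : Fin n → ℕ // ∑ j, c j = m} =>
          ∃ k : Fin n, ∀ j, c'.1 j = c.1 (j + k))) := by
  set R := fun c c' : {c : Fin n → ℕ // ∑ j, c j = m} =>
    ∃ k : Fin n, ∀ j, c'.1 j = c.1 (j + k) with hR
  have hequiv : Equivalence R := by
    constructor
    · intro c; exact ⟨0, fun j => by rw [add_zero]⟩
    · rintro c c' ⟨k, hk⟩
      exact ⟨-k, fun j => by rw [hk (j + -k), add_assoc, neg_add_cancel, add_zero]⟩
    · rintro a b c ⟨k1, hk1⟩ ⟨k2, hk2⟩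
      exact ⟨k2 + k1, fun j => by rw [hk2 j, hk1 (j + k2), add_assoc]⟩
  have hmunit : IsUnit ((m : ZMod n)) := by
    have : Nat.Coprime m n := hnm
    exact (ZMod.isUnit_iff_coprime m n).mpr this
  obtain ⟨u, hu⟩ := hmunit
  apply Nat.card_eq_of_bijective
    (fun c => Quot.mk R ⟨c.1, c.2.1⟩)
  constructor
  · -- injective
    rintro ⟨c, hc, hcd⟩ ⟨d, hd, hdd⟩ heq
    have hrel : R ⟨c, hc⟩ ⟨d, hd⟩ :=
      (Equivalence.eqvGen_iff hequiv).mp (Quot.eq.mp heq)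
    obtain ⟨k, hk⟩ := hrel
    have hdc : d = fun j => c (j + k) := funext hk
    have hwz : wz d = wz c - (k.val : ZMod n) * ∑ j, (c j : ZMod n) := by
      rw [hdc]; exact wz_shift c k
    have hsumc : (∑ j, (c j : ZMod n)) = (m : ZMod n) := by
      rw [← hc]; push_cast; rfl
    have h0c : wz c = 0 := (wz_eq_zero_iff c).mpr hcd
    have h0d : wz d = 0 := (wz_eq_zero_iff d).mpr hdd
    rw [h0c, h0d, hsumc, zero_sub] at hwz
    have hkm : (k.val : ZMod n) * (u : ZMod n) = 0 := by
      rw [hu, ← neg_eq_zero]; exact hwz.symm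
    have hk0 : (k.val : ZMod n) = 0 := by
      have := congrArg (fun t => t * (↑u⁻¹ : ZMod n)) hkm
      simpa using this
    have hdvdk : n ∣ k.val := (ZMod.natCast_eq_zero_iff _ _).mp hk0
    have hkv : k.val = 0 := Nat.eq_zero_of_dvd_of_lt hdvdk k.isLt
    have hkz : k = 0 := Fin.ext (by rw [hkv, Fin.val_zero n])
    apply Subtype.ext
    funext j
    have := hk j
    rw [hkz, add_zero] at this
    exact this.symm
  · -- surjective
    intro t
    obtain ⟨c, rfl⟩ := Quot.exists_rep t
    set κ : ZMod n := wz c.1 * (↑u⁻¹ : ZMod n) with hκ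
    set k : Fin n := ⟨κ.val, ZMod.val_lt κ⟩ with hkdef
    have hkcast : ((k.val : ℕ) : ZMod n) = κ := by
      show ((κ.val : ℕ) : ZMod n) = κ
      rw [ZMod.natCast_val, ZMod.cast_id]
    have hsumc : (∑ j, (c.1 j : ZMod n)) = (m : ZMod n) := by
      exact_mod_cast congrArg (Nat.cast : ℕ → ZMod n) c.2
    refine ⟨⟨fun j => c.1 (j + k), ?_, ?_⟩, ?_⟩
    · rw [sum_shift_nat c.1 k, c.2]
    · apply (wz_eq_zero_iff _).mp
      rw [wz_shift c.1 k, hsumc, hkcast, hκ, ← hu]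
      have : (↑u⁻¹ : ZMod n) * ↑u = 1 := by
        rw [← Units.val_mul, inv_mul_cancel, Units.val_one]
      rw [mul_assoc, this, mul_one, sub_self]
    · apply Quot.sound
      exact ⟨-k, fun j =>
        (by rw [add_assoc, neg_add_cancel, add_zero] :
          c.1 (j + -k + k) = c.1 j).symm⟩


end LCaux

/-- For `n` prime and `gcd(m, n) = 1`, the number of integer points of
the leafed `n`-cycle cone with first coordinate `m` equals the number of cyclic
equivalence classes of compositions of `m` into `n` nonnegative parts. -/
theorem leafed_cycle_cyclically_distinct (n : ℕ) (hn : 3 ≤ n) (hp : n.Prime)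
    (m : ℕ) (hm : 0 < m) (hnm : Nat.gcd m n = 1) :
    {lam : Fin n → ℤ |
        (∀ i, 0 ≤ (leafedCycleLaplacianMinor n).mulVec lam i) ∧
        lam ⟨0, by omega⟩ = (m : ℤ)}.ncard =
      Nat.card (Quot (fun c c' : {c : Fin n → ℕ // ∑ j, c j = m} =>
        ∃ k : Fin n, ∀ j, c'.1 j = c.1 (j + k))) := by
  haveI : NeZero n := ⟨by omega⟩
  rw [← Nat.card_coe_set_eq]
  exact (LCaux.cardA hn m).trans (LCaux.cardB hn m hnm)
end
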